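/- arXiv:1609.07363 — 4 statements merged into one kernel-verified Lean document; each statement's English description precedes it below -/
import Mathlib

section
/- Let the loss function be γ(y;θ) = g(|y−θ|), where g : [0,∞) → [0,∞) is increasing and unbounded with g(0) = 0. Fix n ≥ 1, an index t ∈ {1,…,n}, a penalty β > 0, and fixed values y_s ∈ ℝ for all s ≠ t. Then there exists M ∈ ℝ such that for every value y_t > M, every segmentation τ_{1:k} minimising the penalised cost Q(y_{1:n}; τ_{1:k}) has changepoints at both t−1 and t (that is, both t−1 and t belong to the set {τ_0, τ_1, …, τ_{k+1}}). -/
open MeasureTheory Finset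

/-- Cost of the segment consisting of data points `y_{s+1}, …, y_t`:
the infimum over the location parameter `θ` of the summed loss. -/
noncomputable def segCost (γ : ℝ → ℝ → ℝ) (y : ℕ → ℝ) (s t : ℕ) : ℝ :=
  ⨅ θ : ℝ, ∑ i ∈ Finset.Ioc s t, γ (y i) θ

private lemma sc_nonneg (g : ℝ → ℝ) (hg : ∀ x : ℝ, 0 ≤ x → 0 ≤ g x) (y : ℕ → ℝ) (s e : ℕ) :
    0 ≤ segCost (fun a θ => g |a - θ|) y s e := by
  apply Real.iInf_nonneg
  intro θ
  exact Finset.sum_nonneg fun i _ => hg _ (abs_nonneg _)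

private lemma sc_single (g : ℝ → ℝ) (hg0 : g 0 = 0) (hg : ∀ x : ℝ, 0 ≤ x → 0 ≤ g x)
    (y : ℕ → ℝ) (t : ℕ) (ht : 1 ≤ t) :
    segCost (fun a θ => g |a - θ|) y (t-1) t = 0 := by
  have hIoc : Finset.Ioc (t-1) t = {t} := by ext a; simp [Finset.mem_Ioc]; omega
  unfold segCost
  rw [hIoc]
  apply le_antisymm
  · have h1 : (⨅ θ : ℝ, ∑ i ∈ ({t} : Finset ℕ), g |y i - θ|)
        ≤ ∑ i ∈ ({t} : Finset ℕ), g |y i - y t| := by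
      apply ciInf_le
      refine ⟨0, ?_⟩
      rintro r ⟨θ, rfl⟩
      exact Finset.sum_nonneg fun i _ => hg _ (abs_nonneg _)
    simpa [hg0] using h1
  · exact Real.iInf_nonneg fun θ => Finset.sum_nonneg fun i _ => hg _ (abs_nonneg _)

private lemma sc_congr (γ : ℝ → ℝ → ℝ) (y1 y2 : ℕ → ℝ) (s e : ℕ)
    (h : ∀ a ∈ Finset.Ioc s e, y1 a = y2 a) :
    segCost γ y1 s e = segCost γ y2 s e := by
  unfold segCost
  congr 1; funext θ
  exact Finset.sum_congr rfl fun i hi => by rw [h i hi]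

private lemma sc_two_point (g : ℝ → ℝ) (hg : ∀ x : ℝ, 0 ≤ x → 0 ≤ g x)
    (hm : MonotoneOn g (Set.Ici (0:ℝ))) (y : ℕ → ℝ) (s e u j : ℕ)
    (hu : u ∈ Finset.Ioc s e) (hj : j ∈ Finset.Ioc s e) (hne : j ≠ u)
    (hle : y j ≤ y u) :
    g ((y u - y j)/2) ≤ segCost (fun a θ => g |a - θ|) y s e := by
  apply le_ciInf
  intro θ
  set d := (y u - y j)/2 with hd
  have hd0 : 0 ≤ d := by rw [hd]; linarith
  have hpair : ({u, j} : Finset ℕ) ⊆ Finset.Ioc s e := by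
    intro a ha; simp at ha; rcases ha with rfl | rfl <;> assumption
  have hsum : g |y u - θ| + g |y j - θ| ≤ ∑ i ∈ Finset.Ioc s e, g |y i - θ| := by
    have h1 := Finset.sum_le_sum_of_subset_of_nonneg hpair
      (fun i _ _ => hg _ (abs_nonneg (y i - θ)))
    rwa [Finset.sum_pair (Ne.symm hne)] at h1
  have key : g d ≤ g |y u - θ| + g |y j - θ| := by
    rcases le_or_gt d |y u - θ| with h | h
    · have h1 := hm (Set.mem_Ici.mpr hd0) (Set.mem_Ici.mpr (abs_nonneg _)) h
      have h2 := hg _ (abs_nonneg (y j - θ))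
      linarith
    · have habs : y u - y j ≤ |y u - θ| + |y j - θ| := by
        have h1 := le_abs_self (y u - θ)
        have h2 := neg_le_abs (y j - θ)
        linarith
      have h2 : d ≤ |y j - θ| := by rw [hd] at *; linarith
      have h1 := hm (Set.mem_Ici.mpr hd0) (Set.mem_Ici.mpr (abs_nonneg _)) h2
      have h3 := hg _ (abs_nonneg (y u - θ))
      linarith
  linarith

private lemma seg_mono {k : ℕ} {τ : ℕ → ℕ} (h : ∀ i ≤ k, τ i < τ (i+1)) :
    ∀ a b, a ≤ b → b ≤ k + 1 → τ a ≤ τ b := by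
  intro a b
  induction b with
  | zero =>
    intro hab _
    cases Nat.le_zero.mp hab
    exact le_rfl
  | succ b ih =>
    intro hab hb
    rcases Nat.eq_or_lt_of_le hab with rfl | hlt
    · exact le_rfl
    · exact le_trans (ih (by omega) (by omega)) (le_of_lt (h b (by omega)))

private lemma find_seg {k t : ℕ} {τ : ℕ → ℕ} (h : ∀ i ≤ k, τ i < τ (i+1))
    (h0 : τ 0 < t) (hk : t ≤ τ (k+1)) :
    ∃ i ≤ k, τ i < t ∧ t ≤ τ (i+1) := by
  have main : ∀ m, ∀ i, i ≤ k + 1 → k + 1 - i ≤ m → τ i < t →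
      ∃ i' ≤ k, τ i' < t ∧ t ≤ τ (i'+1) := by
    intro m
    induction m with
    | zero =>
      intro i hi hm hτ
      exfalso
      have : i = k+1 := by omega
      rw [this] at hτ; omega
    | succ m ih =>
      intro i hi hm hτ
      by_cases hik : i = k + 1
      · exfalso; rw [hik] at hτ; omega
      · by_cases h2 : τ (i+1) < t
        · exact ih (i+1) (by omega) (by omega) h2
        · exact ⟨i, by omega, hτ, by omega⟩
  exact main (k+1) 0 (by omega) (by omega) h0

/-- `τ : ℕ → ℕ` encodes a valid segmentation of `y_{1:n}` with `k` changepoints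
`0 = τ 0 < τ 1 < ⋯ < τ k < τ (k+1) = n`. -/
def ValidSeg (n k : ℕ) (τ : ℕ → ℕ) : Prop :=
  τ 0 = 0 ∧ τ (k + 1) = n ∧ ∀ i ≤ k, τ i < τ (i + 1)

/-- Penalised cost of a segmentation. -/
noncomputable def penCost (γ : ℝ → ℝ → ℝ) (y : ℕ → ℝ) (β : ℝ) (k : ℕ) (τ : ℕ → ℕ) : ℝ :=
  ∑ i ∈ Finset.range (k + 1), (segCost γ y (τ i) (τ (i + 1)) + β)

private lemma pen_ge_term (g : ℝ → ℝ) (hg : ∀ x : ℝ, 0 ≤ x → 0 ≤ g x)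
    (y : ℕ → ℝ) (β : ℝ) (hβ : 0 ≤ β) (k : ℕ) (τ : ℕ → ℕ) (i : ℕ) (hi : i ≤ k) :
    segCost (fun a θ => g |a - θ|) y (τ i) (τ (i+1))
      ≤ penCost (fun a θ => g |a - θ|) y β k τ := by
  unfold penCost
  have h1 : segCost (fun a θ => g |a - θ|) y (τ i) (τ (i+1)) + β
      ≤ ∑ i' ∈ Finset.range (k + 1),
          (segCost (fun a θ => g |a - θ|) y (τ i') (τ (i' + 1)) + β) :=
    Finset.single_le_sum
      (f := fun i' => segCost (fun a θ => g |a - θ|) y (τ i') (τ (i' + 1)) + β)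
      (fun j _ => add_nonneg (sc_nonneg g hg y _ _) hβ) (Finset.mem_range.mpr (by omega))
  linarith

/-- For an unbounded increasing loss `γ(y;θ) = g(|y−θ|)` with `g(0)=0`, fixing all data
values except `y_t`, there is an `M` such that whenever `y_t > M`, every segmentation
minimising the penalised cost has changepoints at both `t−1` and `t`. -/
theorem extreme_outlier_forces_changepoints
    (g : ℝ → ℝ) (hg0 : g 0 = 0)
    (hg_nonneg : ∀ x : ℝ, 0 ≤ x → 0 ≤ g x)
    (hg_mono : MonotoneOn g (Set.Ici (0 : ℝ)))
    (hg_unbdd : ∀ C : ℝ, ∃ x : ℝ, 0 ≤ x ∧ C < g x)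
    (n : ℕ) (hn : 1 ≤ n) (t : ℕ) (ht1 : 1 ≤ t) (htn : t ≤ n)
    (β : ℝ) (hβ : 0 < β) (y : ℕ → ℝ) :
    ∃ M : ℝ, ∀ v : ℝ, M < v →
      ∀ (k : ℕ) (τ : ℕ → ℕ), ValidSeg n k τ →
        (∀ (k' : ℕ) (τ' : ℕ → ℕ), ValidSeg n k' τ' →
          penCost (fun a θ => g |a - θ|) (Function.update y t v) β k τ ≤
            penCost (fun a θ => g |a - θ|) (Function.update y t v) β k' τ') →
        (∃ j ≤ k + 1, τ j = t - 1) ∧ (∃ j ≤ k + 1, τ j = t) := by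
  classical
  have hne : (Finset.Ioc 0 n).Nonempty := ⟨n, by simp [Finset.mem_Ioc]; omega⟩
  obtain ⟨x, hx0, hxB⟩ := hg_unbdd
    (segCost (fun a θ => g |a - θ|) y 0 (t-1) + segCost (fun a θ => g |a - θ|) y t n + 3*β)
  set Y : ℝ := (Finset.Ioc 0 n).sup' hne y with hY
  set B₀ : ℝ := segCost (fun a θ => g |a - θ|) y 0 (t-1)
      + segCost (fun a θ => g |a - θ|) y t n + 3*β with hB₀
  refine ⟨Y + 2*x, ?_⟩
  intro v hv k τ hτ hopt
  set y' := Function.update y t v with hy'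
  have hy't : y' t = v := Function.update_self t v y
  have hy'ne : ∀ a, a ≠ t → y' a = y a := fun a ha => Function.update_of_ne ha v y
  obtain ⟨hτ0, hτk, hτlt⟩ := hτ
  have hc1 : segCost (fun a θ => g |a - θ|) y' 0 (t-1)
      = segCost (fun a θ => g |a - θ|) y 0 (t-1) :=
    sc_congr _ _ _ _ _ (fun a ha => hy'ne a (by simp [Finset.mem_Ioc] at ha; omega))
  have hc2 : segCost (fun a θ => g |a - θ|) y' t n
      = segCost (fun a θ => g |a - θ|) y t n :=
    sc_congr _ _ _ _ _ (fun a ha => hy'ne a (by simp [Finset.mem_Ioc] at ha; omega))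
  have hsing : segCost (fun a θ => g |a - θ|) y' (t-1) t = 0 :=
    sc_single g hg0 hg_nonneg y' t ht1
  have hn1 : 0 ≤ segCost (fun a θ => g |a - θ|) y 0 (t-1) := sc_nonneg g hg_nonneg y 0 (t-1)
  have hn2 : 0 ≤ segCost (fun a θ => g |a - θ|) y t n := sc_nonneg g hg_nonneg y t n
  -- upper bound on the optimal cost
  have hub : penCost (fun a θ => g |a - θ|) y' β k τ ≤ B₀ := by
    rcases Nat.lt_or_ge 1 t with ht2 | ht2
    · rcases Nat.lt_or_ge t n with htn2 | htn2
      · -- 2 ≤ t < n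
        have hvalid : ValidSeg n 2
            (fun i => if i = 0 then 0 else if i = 1 then t-1 else if i = 2 then t else n) := by
          refine ⟨by norm_num, by norm_num, ?_⟩
          intro i hi
          interval_cases i <;> simp <;> omega
        have h := hopt 2 _ hvalid
        refine h.trans ?_
        simp only [penCost, Finset.sum_range_succ, Finset.sum_range_zero]
        norm_num
        rw [hc1, hc2, hsing, hB₀]
        linarith
      · -- 2 ≤ t = n
        have htn' : t = n := le_antisymm htn htn2
        have hvalid : ValidSeg n 1
            (fun i => if i = 0 then 0 else if i = 1 then t-1 else n) := by
          refine ⟨by norm_num, by norm_num, ?_⟩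
          intro i hi
          interval_cases i <;> simp <;> omega
        have h := hopt 1 _ hvalid
        refine h.trans ?_
        simp only [penCost, Finset.sum_range_succ, Finset.sum_range_zero]
        norm_num
        have hsing' : segCost (fun a θ => g |a - θ|) y' (t-1) n = 0 := by
          rw [← htn']; exact hsing
        rw [hc1, hsing', hB₀]
        linarith
    · -- t = 1
      have ht' : t = 1 := le_antisymm ht2 ht1
      rcases Nat.lt_or_ge t n with htn2 | htn2
      · -- 1 = t < n
        have hvalid : ValidSeg n 1
            (fun i => if i = 0 then 0 else if i = 1 then t else n) := by
          refine ⟨by norm_num, by norm_num, ?_⟩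
          intro i hi
          interval_cases i <;> simp <;> omega
        have h := hopt 1 _ hvalid
        refine h.trans ?_
        simp only [penCost, Finset.sum_range_succ, Finset.sum_range_zero]
        norm_num
        have h0 : segCost (fun a θ => g |a - θ|) y' 0 t = 0 := by
          have := hsing
          rw [show t - 1 = 0 from by omega] at this
          exact this
        rw [h0, hc2, hB₀]
        linarith
      · -- t = n = 1
        have htn' : t = n := le_antisymm htn htn2
        have hvalid : ValidSeg n 0 (fun i => if i = 0 then 0 else n) := by
          refine ⟨by norm_num, by norm_num, ?_⟩
          intro i hi
          interval_cases i
          simp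
          omega
        have h := hopt 0 _ hvalid
        refine h.trans ?_
        simp only [penCost, Finset.sum_range_succ, Finset.sum_range_zero]
        norm_num
        have h0 : segCost (fun a θ => g |a - θ|) y' 0 n = 0 := by
          have := hsing
          rw [show t - 1 = 0 from by omega, show t = n from htn'] at this
          exact this
        rw [h0, hB₀]
        linarith
  -- lower bound in the bad case
  by_contra hcon
  rw [not_and_or] at hcon
  have h0t : τ 0 < t := by omega
  have hkt : t ≤ τ (k+1) := by omega
  obtain ⟨i, hik, hlt, hge⟩ := find_seg hτlt h0t hkt
  have hτmono := seg_mono hτlt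
  obtain ⟨j, hjI, hjne, hjn⟩ :
      ∃ j, j ∈ Finset.Ioc (τ i) (τ (i+1)) ∧ j ≠ t ∧ j ∈ Finset.Ioc 0 n := by
    rcases hcon with hA | hB
    · push_neg at hA
      have hA' : τ i ≠ t - 1 := hA i (by omega)
      refine ⟨t-1, ?_, by omega, ?_⟩ <;> simp [Finset.mem_Ioc] <;> omega
    · push_neg at hB
      have h1 : τ (i+1) ≠ t := hB (i+1) (by omega)
      have h2 : τ (i+1) ≤ n := by
        have := hτmono (i+1) (k+1) (by omega) (by omega); omega
      refine ⟨t+1, ?_, by omega, ?_⟩ <;> simp [Finset.mem_Ioc] <;> omega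
  have htI : t ∈ Finset.Ioc (τ i) (τ (i+1)) := by simp [Finset.mem_Ioc]; omega
  have hyj : y j ≤ Y := by rw [hY]; exact Finset.le_sup' y hjn
  have hy'j : y' j = y j := hy'ne j hjne
  have hd : x ≤ (y' t - y' j)/2 := by rw [hy't, hy'j]; linarith
  have hgx : g x ≤ g ((y' t - y' j)/2) :=
    hg_mono (Set.mem_Ici.mpr hx0) (Set.mem_Ici.mpr (by linarith)) hd
  have hle' : y' j ≤ y' t := by rw [hy't, hy'j]; linarith
  have hlb := sc_two_point g hg_nonneg hg_mono y' (τ i) (τ (i+1)) t j htI hjI hjne hle'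
  have hpen := pen_ge_term g hg_nonneg y' β (le_of_lt hβ) k τ i hik
  linarith
end

section
/- Assume conditions (A1) and (A2) hold for the biweight loss with parameter K. Then there exist strictly positive constants α, C₁ and δ such that for every integer n ≥ 2 and every integer l with 1 ≤ l ≤ n, P( inf_{θ∈ℝ} S_l(θ) < −α log n ) ≤ C₁ n^{−(2+δ)}. -/
open MeasureTheory ProbabilityTheory

lemma exp_le_one_add_add_sq {x : ℝ} (hx : |x| ≤ 1) : Real.exp x ≤ 1 + x + x ^ 2 := by
  have h := Real.exp_bound hx (n := 2) (by norm_num)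
  have h2 : |Real.exp x - (1 + x)| ≤ |x| ^ 2 * (3 / 4) := by
    convert h using 2
    · simp [Finset.sum_range_succ]
    · norm_num
  have := abs_le.mp h2
  have hx2 : |x| ^ 2 = x ^ 2 := sq_abs x
  nlinarith [sq_nonneg x]

lemma integrable_of_bound {Ω : Type*} [MeasurableSpace Ω] {P : Measure Ω}
    [IsProbabilityMeasure P] {f : Ω → ℝ} (hf : Measurable f) (C : ℝ)
    (h : ∀ ω, |f ω| ≤ C) : Integrable f P :=
  (integrable_const C).mono' hf.aestronglyMeasurable (ae_of_all _ fun ω => by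
    simpa using h ω)

lemma mgf_le_of_bound {Ω : Type*} [MeasurableSpace Ω] {P : Measure Ω}
    [IsProbabilityMeasure P] {Y : Ω → ℝ} (hY : Measurable Y) {c t : ℝ} (hc : 0 < c)
    (hbd : ∀ ω, |Y ω| ≤ c) (htc : |t| * c ≤ 1) :
    mgf Y P t ≤ Real.exp (t * (∫ ω, Y ω ∂P) + t ^ 2 * c ^ 2) := by
  have hYint : Integrable Y P := integrable_of_bound hY c hbd
  have hY2int : Integrable (fun ω => Y ω ^ 2) P :=
    integrable_of_bound (hY.pow_const 2) (c ^ 2) (fun ω => by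
      rw [abs_pow]
      exact pow_le_pow_left₀ (abs_nonneg _) (hbd ω) 2)
  have hexpint : Integrable (fun ω => Real.exp (t * Y ω)) P :=
    integrable_of_bound ((hY.const_mul t).exp) (Real.exp (|t| * c)) (fun ω => by
      rw [abs_of_nonneg (Real.exp_nonneg _)]
      refine Real.exp_le_exp.mpr ?_
      calc t * Y ω ≤ |t * Y ω| := le_abs_self _
        _ = |t| * |Y ω| := abs_mul _ _
        _ ≤ |t| * c := mul_le_mul_of_nonneg_left (hbd ω) (abs_nonneg t))
  have hpt : ∀ ω, Real.exp (t * Y ω) ≤ 1 + t * Y ω + t ^ 2 * Y ω ^ 2 := by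
    intro ω
    have h1 : |t * Y ω| ≤ 1 := by
      calc |t * Y ω| = |t| * |Y ω| := abs_mul _ _
        _ ≤ |t| * c := mul_le_mul_of_nonneg_left (hbd ω) (abs_nonneg t)
        _ ≤ 1 := htc
    have := exp_le_one_add_add_sq h1
    calc Real.exp (t * Y ω) ≤ 1 + t * Y ω + (t * Y ω) ^ 2 := this
      _ = 1 + t * Y ω + t ^ 2 * Y ω ^ 2 := by ring
  have hint2 : Integrable (fun ω => 1 + t * Y ω + t ^ 2 * Y ω ^ 2) P :=
    ((integrable_const 1).add (hYint.const_mul t)).add (hY2int.const_mul (t ^ 2))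
  have h1 : mgf Y P t ≤ ∫ ω, (1 + t * Y ω + t ^ 2 * Y ω ^ 2) ∂P :=
    integral_mono hexpint hint2 hpt
  have h2 : ∫ ω, (1 + t * Y ω + t ^ 2 * Y ω ^ 2) ∂P
      = 1 + t * (∫ ω, Y ω ∂P) + t ^ 2 * ∫ ω, Y ω ^ 2 ∂P := by
    have hA : Integrable (fun ω => 1 + t * Y ω) P :=
      (integrable_const 1).add (hYint.const_mul t)
    have hB : Integrable (fun ω => t ^ 2 * Y ω ^ 2) P := hY2int.const_mul (t ^ 2)
    rw [integral_add hA hB, integral_add (integrable_const (1:ℝ)) (hYint.const_mul t)]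
    rw [MeasureTheory.integral_const_mul, MeasureTheory.integral_const_mul]; simp
  have h3 : ∫ ω, Y ω ^ 2 ∂P ≤ c ^ 2 := by
    calc ∫ ω, Y ω ^ 2 ∂P ≤ ∫ _ω, c ^ 2 ∂P := integral_mono hY2int (integrable_const _)
          (fun ω => by nlinarith [hbd ω, abs_nonneg (Y ω), sq_abs (Y ω), neg_abs_le (Y ω),
            le_abs_self (Y ω)])
      _ = c ^ 2 := by simp
  calc mgf Y P t ≤ 1 + t * (∫ ω, Y ω ∂P) + t ^ 2 * ∫ ω, Y ω ^ 2 ∂P := h1.trans_eq h2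
    _ ≤ 1 + (t * (∫ ω, Y ω ∂P) + t ^ 2 * c ^ 2) := by nlinarith [sq_nonneg t]
    _ ≤ Real.exp (t * (∫ ω, Y ω ∂P) + t ^ 2 * c ^ 2) := by
        have := Real.add_one_le_exp (t * (∫ ω, Y ω ∂P) + t ^ 2 * c ^ 2)
        linarith
lemma lip_min_sq {a b c : ℝ} (hc : 0 ≤ c) :
    |min (a ^ 2) (c ^ 2) - min (b ^ 2) (c ^ 2)| ≤ 2 * c * |a - b| := by
  have ha : min (a ^ 2) (c ^ 2) = (min |a| c) ^ 2 := by
    rw [← sq_abs a]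
    rcases le_total |a| c with h | h
    · rw [min_eq_left h, min_eq_left (by nlinarith [abs_nonneg a])]
    · rw [min_eq_right h, min_eq_right (by nlinarith [abs_nonneg a])]
  have hb : min (b ^ 2) (c ^ 2) = (min |b| c) ^ 2 := by
    rw [← sq_abs b]
    rcases le_total |b| c with h | h
    · rw [min_eq_left h, min_eq_left (by nlinarith [abs_nonneg b])]
    · rw [min_eq_right h, min_eq_right (by nlinarith [abs_nonneg b])]
  rw [ha, hb]
  set p := min |a| c with hp
  set q := min |b| c with hq
  have hp0 : 0 ≤ p := le_min (abs_nonneg a) hc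
  have hq0 : 0 ≤ q := le_min (abs_nonneg b) hc
  have hpc : p ≤ c := min_le_right _ _
  have hqc : q ≤ c := min_le_right _ _
  have hpq : |p - q| ≤ |a - b| := by
    have h1 : |p - q| ≤ max (abs (|a| - |b|)) (|c - c|) := abs_min_sub_min_le_max _ _ _ _
    simp only [sub_self, abs_zero] at h1
    rw [max_eq_left (abs_nonneg _)] at h1
    exact h1.trans (abs_abs_sub_abs_le_abs_sub a b)
  have hd : p ^ 2 - q ^ 2 = (p + q) * (p - q) := by ring
  rw [hd, abs_mul]
  have h2 : |p + q| ≤ 2 * c := by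
    rw [abs_of_nonneg (by linarith)]; linarith
  exact mul_le_mul h2 hpq (abs_nonneg _) (by linarith)
lemma core_bound {Ω : Type*} [MeasurableSpace Ω] (P : Measure Ω) [IsProbabilityMeasure P]
    (Z : ℕ → Ω → ℝ) (hZmeas : ∀ i, Measurable (Z i))
    (hZindep : iIndepFun Z P)
    (hZident : ∀ i, IdentDistrib (Z i) (Z 0) P P)
    (g : ℝ → ℝ) (hg : Measurable g) {c μ : ℝ} (hc : 0 < c)
    (hbd : ∀ z, |g z| ≤ c) (hμpos : 0 < μ) (hμ : μ ≤ ∫ ω, g (Z 0 ω) ∂P)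
    {l : ℕ} (hl : 1 ≤ l) {s : ℝ} (hs : 0 < s) :
    (P {ω | ∑ i ∈ Finset.Icc 1 l, g (Z i ω) ≤ -s}).toReal ≤
      Real.exp (-(min (μ * s / c ^ 2) (s / (2 * c)))) := by
  classical
  set Y : ℕ → Ω → ℝ := fun i ω => g (Z i ω) with hYdef
  have hYmeas : ∀ i, Measurable (Y i) := fun i => hg.comp (hZmeas i)
  have hYindep : iIndepFun Y P :=
    hZindep.comp (fun _ => g) (fun _ => hg)
  have hlr : (0:ℝ) < (l:ℝ) := by exact_mod_cast hl
  have key : ∀ t : ℝ, t ≤ 0 → |t| * c ≤ 1 →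
      (P {ω | ∑ i ∈ Finset.Icc 1 l, g (Z i ω) ≤ -s}).toReal ≤
        Real.exp (t * ((l:ℝ) * μ + s) + (l:ℝ) * (t ^ 2 * c ^ 2)) := by
    intro t ht htc
    have hint : ∀ i ∈ Finset.Icc 1 l, Integrable (fun ω => Real.exp (t * Y i ω)) P := by
      intro i _
      refine integrable_of_bound ((hYmeas i).const_mul t).exp (Real.exp (|t| * c)) fun ω => ?_
      rw [abs_of_nonneg (Real.exp_nonneg _)]
      refine Real.exp_le_exp.mpr ?_
      calc t * Y i ω ≤ |t * Y i ω| := le_abs_self _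
        _ = |t| * |Y i ω| := abs_mul _ _
        _ ≤ |t| * c := mul_le_mul_of_nonneg_left (hbd _) (abs_nonneg t)
    have hSint := hYindep.integrable_exp_mul_sum hYmeas hint
    have hcher := measure_le_le_exp_mul_mgf (μ := P) (X := ∑ i ∈ Finset.Icc 1 l, Y i)
      (-s) ht hSint
    have hev : {ω | (∑ i ∈ Finset.Icc 1 l, Y i) ω ≤ -s}
        = {ω | ∑ i ∈ Finset.Icc 1 l, g (Z i ω) ≤ -s} := by
      ext ω; simp [Finset.sum_apply, hYdef]
    rw [hev] at hcher
    have hmgfsum : mgf (∑ i ∈ Finset.Icc 1 l, Y i) P t = (mgf (Y 0) P t) ^ l := by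
      rw [hYindep.mgf_sum hYmeas]
      have heq : ∀ i ∈ Finset.Icc 1 l, mgf (Y i) P t = mgf (Y 0) P t := by
        intro i _
        have hid : IdentDistrib (fun ω => Real.exp (t * Y i ω))
            (fun ω => Real.exp (t * Y 0 ω)) P P :=
          ((hZident i).comp hg).comp ((measurable_id.const_mul t).exp)
        exact hid.integral_eq
      rw [Finset.prod_congr rfl heq, Finset.prod_const, Nat.card_Icc]
      norm_num
    have hmgf1 : mgf (Y 0) P t ≤ Real.exp (t * μ + t ^ 2 * c ^ 2) := by
      have h1 : mgf (Y 0) P t ≤ Real.exp (t * (∫ ω, Y 0 ω ∂P) + t ^ 2 * c ^ 2) :=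
        mgf_le_of_bound (hYmeas 0) hc (fun ω => hbd _) htc
      refine h1.trans (Real.exp_le_exp.mpr ?_)
      have : t * (∫ ω, Y 0 ω ∂P) ≤ t * μ :=
        mul_le_mul_of_nonpos_left hμ ht
      linarith
    calc (P {ω | ∑ i ∈ Finset.Icc 1 l, g (Z i ω) ≤ -s}).toReal
        ≤ Real.exp (-t * (-s)) * mgf (∑ i ∈ Finset.Icc 1 l, Y i) P t := hcher
      _ = Real.exp (t * s) * (mgf (Y 0) P t) ^ l := by rw [hmgfsum]; ring_nf
      _ ≤ Real.exp (t * s) * (Real.exp (t * μ + t ^ 2 * c ^ 2)) ^ l :=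
          mul_le_mul_of_nonneg_left (pow_le_pow_left₀ mgf_nonneg hmgf1 l)
            (Real.exp_nonneg _)
      _ = Real.exp (t * s + (l:ℝ) * (t * μ + t ^ 2 * c ^ 2)) := by
          rw [← Real.exp_nat_mul, ← Real.exp_add]
      _ = Real.exp (t * ((l:ℝ) * μ + s) + (l:ℝ) * (t ^ 2 * c ^ 2)) := by ring_nf
  set A : ℝ := (l:ℝ) * μ + s with hA
  have hApos : 0 < A := by positivity
  by_cases hcase : A ≤ 2 * (l:ℝ) * c
  · set t : ℝ := -(A / (2 * (l:ℝ) * c ^ 2)) with htdef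
    have ht : t ≤ 0 := by
      rw [htdef]; simp only [neg_nonpos]; positivity
    have habs : |t| = A / (2 * (l:ℝ) * c ^ 2) := by
      rw [htdef, abs_neg, abs_of_nonneg (by positivity)]
    have htc : |t| * c ≤ 1 := by
      rw [habs]
      rw [div_mul_eq_mul_div, div_le_one (by positivity)]
      calc A * c ≤ 2 * (l:ℝ) * c * c := by gcongr
        _ = 2 * (l:ℝ) * c ^ 2 := by ring
    refine (key t ht htc).trans (Real.exp_le_exp.mpr ?_)
    have hval : t * A + (l:ℝ) * (t ^ 2 * c ^ 2) = -(A ^ 2 / (4 * (l:ℝ) * c ^ 2)) := by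
      rw [htdef]; field_simp; ring
    rw [hval]
    have h4 : μ * s / c ^ 2 ≤ A ^ 2 / (4 * (l:ℝ) * c ^ 2) := by
      rw [div_le_div_iff₀ (by positivity) (by positivity), hA]
      nlinarith [mul_nonneg (sq_nonneg ((l:ℝ) * μ - s)) (sq_nonneg c)]
    have := min_le_left (μ * s / c ^ 2) (s / (2 * c))
    linarith
  · push_neg at hcase
    set t : ℝ := -(1 / c) with htdef
    have ht : t ≤ 0 := by rw [htdef]; simp only [neg_nonpos]; positivity
    have htc : |t| * c ≤ 1 := by
      rw [htdef, abs_neg, abs_of_nonneg (by positivity)]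
      rw [div_mul_eq_mul_div, one_mul, div_self hc.ne']
    refine (key t ht htc).trans (Real.exp_le_exp.mpr ?_)
    have hval : t * A + (l:ℝ) * (t ^ 2 * c ^ 2) = -(A / c) + (l:ℝ) := by
      rw [htdef]; field_simp
    rw [hval]
    have h1 : (l:ℝ) < A / (2 * c) := by
      rw [lt_div_iff₀ (by positivity)]; nlinarith
    have h2 : s / (2 * c) ≤ A / (2 * c) := by
      apply div_le_div_of_nonneg_right ?_ (by positivity)
      · nlinarith
    have h3 : -(A / c) + (l:ℝ) ≤ -(A / (2 * c)) := by
      have : A / c = 2 * (A / (2 * c)) := by field_simp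
      linarith
    have := min_le_right (μ * s / c ^ 2) (s / (2 * c))
    linarith
lemma integral_ite_abs_gt {Ω : Type*} [MeasurableSpace Ω] (P : Measure Ω)
    [IsProbabilityMeasure P] (W : Ω → ℝ) (hW : Measurable W) (b r : ℝ) :
    ∫ ω, (if b < |W ω| then r else 0) ∂P = r * (P {ω | b < |W ω|}).toReal := by
  have hs : MeasurableSet {ω | b < |W ω|} := measurableSet_lt measurable_const hW.abs
  have he : (fun ω => if b < |W ω| then r else 0)
      = Set.indicator {ω | b < |W ω|} (fun _ => r) := by
    funext ω; simp [Set.indicator_apply, Set.mem_setOf_eq]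
  rw [he, integral_indicator hs, setIntegral_const, smul_eq_mul, mul_comm]; rfl
lemma arith_exp1 {A L mu c : ℝ} (hL : 0 < L) (hc : 0 < c) (hr : 8 * c ^ 2 ≤ A * mu) :
    4 * L * c ^ 2 ≤ mu * (A * L / 2) := by
  nlinarith [mul_nonneg (sub_nonneg.mpr hr) hL.le]

lemma arith_exp2 {A L c Kv : ℝ} (hL : 0 < L) (hc : 0 < c) (hcK : c ≤ Kv ^ 2)
    (h4 : 16 * Kv ^ 2 ≤ A) : 4 * L * (2 * c) ≤ A * L / 2 := by
  nlinarith [mul_nonneg (sub_nonneg.mpr (hcK.trans (by linarith : Kv ^ 2 ≤ A / 16))) hL.le]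

lemma arith_ratio1 {A c₁ Kv θ : ℝ} (hθ2 : 0 < θ ^ 2) (h1 : 32 * Kv ^ 2 ≤ A * c₁) :
    8 * (2 * Kv * |θ|) ^ 2 ≤ A * (c₁ * θ ^ 2) := by
  nlinarith [sq_abs θ, mul_nonneg (sub_nonneg.mpr h1) hθ2.le]

lemma arith_ratio2 {A c₂ Kv θ : ℝ} (hKv : 0 < Kv) (hle : 2 * Kv * |θ| ≤ Kv ^ 2)
    (h2 : 8 * Kv ^ 4 ≤ A * c₂) : 8 * (2 * Kv * |θ|) ^ 2 ≤ A * c₂ := by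
  nlinarith [mul_le_mul hle hle (by positivity) (sq_nonneg Kv)]

lemma arith_ratio3 {A c₁ Kv θ : ℝ} (hKv : 0 < Kv) (hθ2 : 0 < θ ^ 2)
    (hle : Kv ^ 2 ≤ 2 * Kv * |θ|) (h1 : 32 * Kv ^ 2 ≤ A * c₁) :
    8 * (Kv ^ 2) ^ 2 ≤ A * (c₁ * θ ^ 2) := by
  have hsq : (Kv ^ 2) ^ 2 ≤ 4 * Kv ^ 2 * θ ^ 2 := by
    nlinarith [mul_le_mul hle hle (by positivity : (0:ℝ) ≤ Kv ^ 2) (by positivity : (0:ℝ) ≤ 2 * Kv * |θ|), sq_abs θ]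
  nlinarith [hsq, mul_nonneg (sub_nonneg.mpr h1) hθ2.le]

lemma arith_ratio4 {A c₂ Kv : ℝ} (h2 : 8 * Kv ^ 4 ≤ A * c₂) :
    8 * (Kv ^ 2) ^ 2 ≤ A * c₂ := by nlinarith

lemma arith_ratioW {A av Kv : ℝ} (h3 : 16 * Kv ^ 4 ≤ A * av) :
    8 * (Kv ^ 2) ^ 2 ≤ A * (av / 2) := by nlinarith

set_option maxHeartbeats 2000000 in
/-- Lemma 1 of the paper: under conditions (A1) and (A2) for the biweight loss with
parameter `K`, there are strictly positive constants `α, C₁, δ` such that for every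
`n ≥ 2` and `1 ≤ l ≤ n`,
`P( inf_θ S_l(θ) < −α log n ) ≤ C₁ n^{−(2+δ)}`,
where `S_l(θ) = Σ_{i=1}^l [min{(Z_i−θ)², K²} − min{Z_i², K²}]` for IID noise `Z_i`. -/
theorem inf_partial_sum_lower_tail
    {Ω : Type*} [MeasurableSpace Ω] (P : Measure Ω) [IsProbabilityMeasure P]
    (K : ℝ) (hK : 0 < K)
    (Z : ℕ → Ω → ℝ) (hZmeas : ∀ i, Measurable (Z i))
    (hZindep : iIndepFun Z P)
    (hZident : ∀ i, IdentDistrib (Z i) (Z 0) P P)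
    -- Condition (A1): `M(θ) = E[min{(Z−θ)², K²}]` is minimised at `0` and grows
    -- at least like `min{c₁θ², c₂}`.
    (c₁ c₂ : ℝ) (hc₁ : 0 < c₁) (hc₂ : 0 < c₂)
    (hA1min : ∀ θ : ℝ,
      (∫ ω, min ((Z 0 ω - (0 : ℝ)) ^ 2) (K ^ 2) ∂P) ≤
        ∫ ω, min ((Z 0 ω - θ) ^ 2) (K ^ 2) ∂P)
    (hA1 : ∀ θ : ℝ,
      (∫ ω, min ((Z 0 ω - (0 : ℝ)) ^ 2) (K ^ 2) ∂P) + min (c₁ * θ ^ 2) c₂ ≤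
        ∫ ω, min ((Z 0 ω - θ) ^ 2) (K ^ 2) ∂P)
    -- Condition (A2): `K²(1−2p) − (1−p)σ² > 0`, with
    -- `(1−p)σ² = E[Z²·1_{|Z| ≤ K}]` and `p = P(|Z| > K)`.
    (hA2 : 0 < K ^ 2 * (1 - 2 * (P {ω | K < |Z 0 ω|}).toReal) -
        ∫ ω, (if |Z 0 ω| ≤ K then (Z 0 ω) ^ 2 else 0) ∂P) :
    ∃ α C₁ δ : ℝ, 0 < α ∧ 0 < C₁ ∧ 0 < δ ∧
      ∀ n : ℕ, 2 ≤ n → ∀ l : ℕ, 1 ≤ l → l ≤ n →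
        (P {ω | (⨅ θ : ℝ, ∑ i ∈ Finset.Icc 1 l,
            (min ((Z i ω - θ) ^ 2) (K ^ 2) - min ((Z i ω) ^ 2) (K ^ 2))) <
              -α * Real.log n}).toReal ≤ C₁ * (n : ℝ) ^ (-(2 + δ)) := by
  classical
  -- basic facts about the truncated square
  have hmin_nonneg : ∀ x : ℝ, 0 ≤ min (x ^ 2) (K ^ 2) := fun x =>
    le_min (sq_nonneg x) (sq_nonneg K)
  have hmin_le : ∀ x : ℝ, min (x ^ 2) (K ^ 2) ≤ K ^ 2 := fun x => min_le_right _ _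
  have hminmeas : ∀ θ : ℝ, Measurable (fun z : ℝ => min ((z - θ) ^ 2) (K ^ 2)) :=
    fun θ => (((measurable_id.sub_const θ).pow_const 2).min measurable_const)
  have hint_min : ∀ θ : ℝ, Integrable (fun ω => min ((Z 0 ω - θ) ^ 2) (K ^ 2)) P := by
    intro θ
    refine integrable_of_bound ((hminmeas θ).comp (hZmeas 0)) (K ^ 2) fun ω => ?_
    rw [abs_of_nonneg (hmin_nonneg _)]
    exact hmin_le _
  set M0 : ℝ := ∫ ω, min ((Z 0 ω) ^ 2) (K ^ 2) ∂P with hM0def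
  have hA1' : ∀ θ : ℝ, M0 + min (c₁ * θ ^ 2) c₂ ≤
      ∫ ω, min ((Z 0 ω - θ) ^ 2) (K ^ 2) ∂P := by
    intro θ
    have := hA1 θ
    simpa [hM0def, sub_zero] using this
  -- Split `M0` and get `a = K² − M0 > 0` from (A2)
  have hsplit : M0 = (∫ ω, (if |Z 0 ω| ≤ K then (Z 0 ω) ^ 2 else 0) ∂P)
      + K ^ 2 * (P {ω | K < |Z 0 ω|}).toReal := by
    have hpt : ∀ ω, min ((Z 0 ω) ^ 2) (K ^ 2)
        = (if |Z 0 ω| ≤ K then (Z 0 ω) ^ 2 else 0) + (if K < |Z 0 ω| then K ^ 2 else 0) := by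
      intro ω
      rcases le_or_gt |Z 0 ω| K with h | h
      · rw [if_pos h, if_neg (not_lt.mpr h), add_zero, min_eq_left]
        calc (Z 0 ω) ^ 2 = |Z 0 ω| ^ 2 := (sq_abs _).symm
          _ ≤ K ^ 2 := pow_le_pow_left₀ (abs_nonneg _) h 2
      · rw [if_neg (not_le.mpr h), if_pos h, zero_add, min_eq_right]
        calc K ^ 2 ≤ |Z 0 ω| ^ 2 := pow_le_pow_left₀ hK.le h.le 2
          _ = (Z 0 ω) ^ 2 := sq_abs _
    have hint1 : Integrable (fun ω => if |Z 0 ω| ≤ K then (Z 0 ω) ^ 2 else 0) P := by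
      refine integrable_of_bound (Measurable.ite
        (measurableSet_le (hZmeas 0).abs measurable_const)
        ((hZmeas 0).pow_const 2) measurable_const) (K ^ 2) fun ω => ?_
      split_ifs with h
      · rw [abs_of_nonneg (sq_nonneg _)]
        calc (Z 0 ω) ^ 2 = |Z 0 ω| ^ 2 := (sq_abs _).symm
          _ ≤ K ^ 2 := pow_le_pow_left₀ (abs_nonneg _) h 2
      · simpa using sq_nonneg K
    have hint2 : Integrable (fun ω => if K < |Z 0 ω| then K ^ 2 else 0) P := by
      refine integrable_of_bound (Measurable.ite
        (measurableSet_lt measurable_const (hZmeas 0).abs)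
        measurable_const measurable_const) (K ^ 2) fun ω => ?_
      split_ifs
      · rw [abs_of_nonneg (sq_nonneg _)]
      · simpa using sq_nonneg K
    calc M0 = ∫ ω, ((if |Z 0 ω| ≤ K then (Z 0 ω) ^ 2 else 0)
          + (if K < |Z 0 ω| then K ^ 2 else 0)) ∂P := by
          rw [hM0def]; exact integral_congr_ae (ae_of_all _ hpt)
      _ = (∫ ω, (if |Z 0 ω| ≤ K then (Z 0 ω) ^ 2 else 0) ∂P)
          + ∫ ω, (if K < |Z 0 ω| then K ^ 2 else 0) ∂P := integral_add hint1 hint2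
      _ = _ := by rw [integral_ite_abs_gt P (Z 0) (hZmeas 0) K (K ^ 2)]
  set a : ℝ := K ^ 2 - M0 with hadef
  have ha : 0 < a := by
    have hp0 : 0 ≤ (P {ω | K < |Z 0 ω|}).toReal := ENNReal.toReal_nonneg
    have : 0 ≤ K ^ 2 * (P {ω | K < |Z 0 ω|}).toReal := by positivity
    rw [hadef, hsplit]; nlinarith [hA2]
  -- choose the tail threshold m
  have htend : Filter.Tendsto (fun m : ℕ => (P {ω | (m : ℝ) < |Z 0 ω|}).toReal)
      Filter.atTop (nhds 0) := by
    have hmeas : ∀ m : ℕ, MeasurableSet {ω | (m : ℝ) < |Z 0 ω|} := fun m =>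
      measurableSet_lt measurable_const (hZmeas 0).abs
    have hanti : Antitone (fun m : ℕ => {ω | (m : ℝ) < |Z 0 ω|}) := by
      intro i j hij ω hω
      have : (i : ℝ) ≤ (j : ℝ) := Nat.cast_le.mpr hij
      exact lt_of_le_of_lt this hω
    have hiInter : (⋂ m : ℕ, {ω | (m : ℝ) < |Z 0 ω|}) = ∅ := by
      ext ω
      simp only [Set.mem_iInter, Set.mem_setOf_eq, Set.mem_empty_iff_false, iff_false, not_forall,
        not_lt]
      obtain ⟨m, hm⟩ := exists_nat_ge |Z 0 ω|
      exact ⟨m, hm⟩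
    have h0 : Filter.Tendsto (fun m : ℕ => P {ω | (m : ℝ) < |Z 0 ω|})
        Filter.atTop (nhds 0) := by
      have := MeasureTheory.tendsto_measure_iInter_atTop (μ := P)
        (s := fun m : ℕ => {ω | (m : ℝ) < |Z 0 ω|})
        (fun m => (hmeas m).nullMeasurableSet) hanti ⟨0, measure_ne_top _ _⟩
      rwa [hiInter, measure_empty] at this
    exact (ENNReal.tendsto_toReal ENNReal.zero_ne_top).comp h0
  have hεpos : 0 < a / (2 * K ^ 2) := by positivity
  obtain ⟨m, hm'⟩ := (htend.eventually_lt_const hεpos).exists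
  set T : ℝ := (m : ℝ) + K with hTdef
  have hmnn : (0:ℝ) ≤ (m:ℝ) := Nat.cast_nonneg m
  have hT : 0 < T := by rw [hTdef]; linarith
  -- tail comparison function
  set gW : ℝ → ℝ := fun z => K ^ 2 - min (z ^ 2) (K ^ 2)
    - (if (m : ℝ) < |z| then K ^ 2 else 0) with hgWdef
  have hgWmeas : Measurable gW := by
    refine (measurable_const.sub ((measurable_id.pow_const 2).min measurable_const)).sub ?_
    exact Measurable.ite (measurableSet_lt measurable_const measurable_abs)
      measurable_const measurable_const
  have hgWbd : ∀ z, |gW z| ≤ K ^ 2 := by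
    intro z
    have h1 := hmin_nonneg z
    have h2 := hmin_le z
    simp only [hgWdef]
    split_ifs with h <;> rw [abs_le] <;> constructor <;> nlinarith [sq_nonneg K]
  have hgWmean : a / 2 ≤ ∫ ω, gW (Z 0 ω) ∂P := by
    have hint1 : Integrable (fun ω => K ^ 2 - min ((Z 0 ω) ^ 2) (K ^ 2)) P :=
      (integrable_const (K ^ 2)).sub (by simpa [sub_zero] using hint_min 0)
    have hint2 : Integrable (fun ω => if (m : ℝ) < |Z 0 ω| then K ^ 2 else 0) P := by
      refine integrable_of_bound (Measurable.ite
        (measurableSet_lt measurable_const (hZmeas 0).abs)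
        measurable_const measurable_const) (K ^ 2) fun ω => ?_
      split_ifs
      · rw [abs_of_nonneg (sq_nonneg _)]
      · simpa using sq_nonneg K
    have heq : ∫ ω, gW (Z 0 ω) ∂P
        = (K ^ 2 - M0) - K ^ 2 * (P {ω | (m : ℝ) < |Z 0 ω|}).toReal := by
      rw [hgWdef]
      rw [integral_sub hint1 hint2, integral_sub (integrable_const (K ^ 2))
        (by simpa [sub_zero] using hint_min 0), integral_const]
      rw [integral_ite_abs_gt P (Z 0) (hZmeas 0) (m : ℝ) (K ^ 2)]
      simp [hM0def]
    rw [heq]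
    have hKp : (0:ℝ) < K ^ 2 := by positivity
    have : K ^ 2 * (P {ω | (m : ℝ) < |Z 0 ω|}).toReal ≤ K ^ 2 * (a / (2 * K ^ 2)) :=
      mul_le_mul_of_nonneg_left hm'.le hKp.le
    have heq2 : K ^ 2 * (a / (2 * K ^ 2)) = a / 2 := by field_simp
    linarith
  -- the constants
  set α : ℝ := max (max (32 * K ^ 2 / c₁) (8 * K ^ 4 / c₂)) (max (16 * K ^ 4 / a) (16 * K ^ 2))
    with hαdef
  have hα : 0 < α := by
    have h16 : (0:ℝ) < 16 * K ^ 2 := by positivity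
    exact h16.trans_le ((le_max_right _ _).trans (le_max_right _ _))
  have hα1 : 32 * K ^ 2 ≤ α * c₁ := by
    have h := (le_max_left _ _).trans (le_max_left (max (32 * K ^ 2 / c₁) (8 * K ^ 4 / c₂))
      (max (16 * K ^ 4 / a) (16 * K ^ 2)))
    have := (div_le_iff₀ hc₁).mp h
    rw [← hαdef] at this
    linarith
  have hα2 : 8 * K ^ 4 ≤ α * c₂ := by
    have h := (le_max_right (32 * K ^ 2 / c₁) _).trans
      (le_max_left (max (32 * K ^ 2 / c₁) (8 * K ^ 4 / c₂))
      (max (16 * K ^ 4 / a) (16 * K ^ 2)))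
    have := (div_le_iff₀ hc₂).mp h
    rw [← hαdef] at this
    linarith
  have hα3 : 16 * K ^ 4 ≤ α * a := by
    have h := (le_max_left (16 * K ^ 4 / a) (16 * K ^ 2)).trans
      (le_max_right (max (32 * K ^ 2 / c₁) (8 * K ^ 4 / c₂)) _)
    have := (div_le_iff₀ ha).mp h
    rw [← hαdef] at this
    linarith
  have hα4 : 16 * K ^ 2 ≤ α := (le_max_right (16 * K ^ 4 / a) (16 * K ^ 2)).trans
    (le_max_right (max (32 * K ^ 2 / c₁) (8 * K ^ 4 / c₂)) _)
  have hlog2 : 0 < Real.log 2 := Real.log_pos one_lt_two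
  set C : ℝ := 8 * K * T / (α * Real.log 2) + 3 with hCdef
  have hC : 0 < C := by
    have h1 : 0 ≤ 8 * K * T / (α * Real.log 2) :=
      div_nonneg (by positivity) (mul_nonneg hα.le hlog2.le)
    rw [hCdef]; linarith
  refine ⟨α, C, 1, hα, hC, one_pos, ?_⟩
  intro n hn l hl hln
  have hn1 : (1:ℝ) < (n:ℝ) := by exact_mod_cast Nat.one_lt_cast.mpr (by omega)
  have hn0 : (0:ℝ) < (n:ℝ) := by linarith
  set L : ℝ := Real.log n with hLdef
  have hL : 0 < L := Real.log_pos hn1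
  have hL2 : Real.log 2 ≤ L := Real.log_le_log (by norm_num) (by exact_mod_cast hn)
  have hlr : (0:ℝ) < (l:ℝ) := by exact_mod_cast hl
  have hlrn : (l:ℝ) ≤ (n:ℝ) := by exact_mod_cast hln
  set s : ℝ := α * L / 2 with hsdef
  have hs : 0 < s := by rw [hsdef]; positivity
  set η : ℝ := α * L / (4 * K * (l:ℝ)) with hηdef
  have hη : 0 < η := by rw [hηdef]; positivity
  set N : ℕ := Nat.ceil (2 * T / η) with hNdef
  set gθ : ℝ → ℝ → ℝ := fun θ z => min ((z - θ) ^ 2) (K ^ 2) - min (z ^ 2) (K ^ 2) with hgθdef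
  -- uniform bound at any fixed grid location
  have hexp_min : ∀ (g : ℝ → ℝ), Measurable g → ∀ c μ : ℝ, 0 < c → c ≤ K ^ 2 →
      (∀ z, |g z| ≤ c) → 0 < μ → μ ≤ ∫ ω, g (Z 0 ω) ∂P → 8 * c ^ 2 ≤ α * μ →
      (P {ω | ∑ i ∈ Finset.Icc 1 l, g (Z i ω) ≤ -s}).toReal ≤ Real.exp (-(4 * L)) := by
    intro g hgmeas c μ hc hcK hbd hμpos hμ hratio
    have hcore := core_bound P Z hZmeas hZindep hZident g hgmeas hc hbd hμpos hμ hl hs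
    refine hcore.trans (Real.exp_le_exp.mpr (neg_le_neg ?_))
    refine le_min ?_ ?_
    · rw [hsdef, le_div_iff₀ (by positivity)]
      exact arith_exp1 hL hc hratio
    · rw [hsdef, le_div_iff₀ (by positivity)]
      exact arith_exp2 hL hc hcK hα4
  have hpoint : ∀ θ : ℝ,
      (P {ω | ∑ i ∈ Finset.Icc 1 l, gθ θ (Z i ω) ≤ -s}).toReal ≤ Real.exp (-(4 * L)) := by
    intro θ
    by_cases hθ : θ = 0
    · subst hθ
      have hset : {ω | ∑ i ∈ Finset.Icc 1 l, gθ 0 (Z i ω) ≤ -s} = (∅ : Set Ω) := by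
        ext ω
        simp only [Set.mem_setOf_eq, Set.mem_empty_iff_false, iff_false, not_le, hgθdef,
          sub_zero, sub_self, Finset.sum_const_zero]
        linarith
      rw [hset]
      simp only [measure_empty, ENNReal.toReal_zero]
      positivity
    · have hθ2 : 0 < θ ^ 2 := by
        rcases Ne.lt_or_gt hθ with h | h
        · nlinarith
        · nlinarith
      have habs : 0 < |θ| := abs_pos.mpr hθ
      set c : ℝ := min (2 * K * |θ|) (K ^ 2) with hcdef
      have hc : 0 < c := lt_min (by positivity) (by positivity)
      have hcK : c ≤ K ^ 2 := min_le_right _ _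
      set μ : ℝ := min (c₁ * θ ^ 2) c₂ with hμdef
      have hμpos : 0 < μ := lt_min (by positivity) hc₂
      have hbd : ∀ z, |gθ θ z| ≤ c := by
        intro z
        refine le_min ?_ ?_
        · have h1 := lip_min_sq (a := z - θ) (b := z) (c := K) hK.le
          rw [show z - θ - z = -θ by ring, abs_neg] at h1
          simpa [hgθdef] using h1
        · have h1 := hmin_nonneg (z - θ)
          have h2 := hmin_le (z - θ)
          have h3 := hmin_nonneg z
          have h4 := hmin_le z
          simp only [hgθdef]
          rw [abs_le]
          constructor <;> linarith
      have hmean : μ ≤ ∫ ω, gθ θ (Z 0 ω) ∂P := by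
        have heq : ∫ ω, gθ θ (Z 0 ω) ∂P
            = (∫ ω, min ((Z 0 ω - θ) ^ 2) (K ^ 2) ∂P) - M0 := by
          simp only [hgθdef]
          rw [integral_sub (hint_min θ) (by simpa [sub_zero] using hint_min 0)]
        rw [heq]
        have := hA1' θ
        rw [hμdef]; linarith
      refine hexp_min (gθ θ) ?_ c μ hc hcK hbd hμpos hmean ?_
      · exact ((hminmeas θ)).sub ((measurable_id.pow_const 2).min measurable_const)
      · -- 8 c² ≤ α μ, four cases
        rcases min_cases (2 * K * |θ|) (K ^ 2) with ⟨hceq, hcle⟩ | ⟨hceq, hcle⟩ <;>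
          rcases min_cases (c₁ * θ ^ 2) c₂ with ⟨hμeq, hμle⟩ | ⟨hμeq, hμle⟩ <;>
            rw [hcdef, hceq, hμdef, hμeq]
        · exact arith_ratio1 hθ2 hα1
        · exact arith_ratio2 hK hcle hα2
        · exact arith_ratio3 hK hθ2 hcle.le hα1
        · exact arith_ratio4 hα2
  have htail : (P {ω | ∑ i ∈ Finset.Icc 1 l, gW (Z i ω) ≤ -s}).toReal
      ≤ Real.exp (-(4 * L)) := by
    refine hexp_min gW hgWmeas (K ^ 2) (a / 2) (by positivity) le_rfl hgWbd
      (by positivity) hgWmean ?_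
    exact arith_ratioW hα3
  set grid : ℕ → ℝ := fun j => -T + (j : ℝ) * η with hgriddef
  -- covering step
  have hsub : {ω | (⨅ θ : ℝ, ∑ i ∈ Finset.Icc 1 l,
        (min ((Z i ω - θ) ^ 2) (K ^ 2) - min ((Z i ω) ^ 2) (K ^ 2))) < -α * L}
      ⊆ {ω | ∑ i ∈ Finset.Icc 1 l, gW (Z i ω) ≤ -s}
        ∪ ⋃ j ∈ Finset.range (N + 1),
            {ω | ∑ i ∈ Finset.Icc 1 l, gθ (grid j) (Z i ω) ≤ -s} := by
    intro ω hω
    simp only [Set.mem_setOf_eq] at hω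
    obtain ⟨θ₀, hθ₀⟩ := exists_lt_of_ciInf_lt hω
    have hθ₀' : ∑ i ∈ Finset.Icc 1 l, gθ θ₀ (Z i ω) < -α * L := hθ₀
    by_cases hcase : |θ₀| ≤ T
    · right
      have hrange := abs_le.mp hcase
      have hx0 : 0 ≤ (θ₀ + T) / η := div_nonneg (by linarith) hη.le
      set j : ℕ := ⌊(θ₀ + T) / η⌋₊ with hjdef
      have hjN : j ≤ N := by
        have h1 : (θ₀ + T) / η ≤ 2 * T / η := by
          gcongr
          linarith
        calc j ≤ ⌊2 * T / η⌋₊ := Nat.floor_mono h1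
          _ ≤ ⌈2 * T / η⌉₊ := Nat.floor_le_ceil _
          _ = N := rfl
      have hd1 : (j : ℝ) * η ≤ θ₀ + T := by
        have h1 : (j : ℝ) ≤ (θ₀ + T) / η := Nat.floor_le hx0
        calc (j : ℝ) * η ≤ ((θ₀ + T) / η) * η := mul_le_mul_of_nonneg_right h1 hη.le
          _ = θ₀ + T := div_mul_cancel₀ _ hη.ne'
      have hd2 : θ₀ + T < ((j : ℝ) + 1) * η := by
        have h1 : (θ₀ + T) / η < (j : ℝ) + 1 := by
          exact_mod_cast Nat.lt_floor_add_one ((θ₀ + T) / η)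
        calc θ₀ + T = ((θ₀ + T) / η) * η := (div_mul_cancel₀ _ hη.ne').symm
          _ < ((j : ℝ) + 1) * η := by
              exact mul_lt_mul_of_pos_right h1 hη
      have hdist : |θ₀ - grid j| ≤ η := by
        have hg : grid j = -T + (j : ℝ) * η := by rw [hgriddef]
        rw [hg, abs_le]
        constructor <;> linarith
      have hterm : ∀ i ∈ Finset.Icc 1 l,
          gθ (grid j) (Z i ω) ≤ gθ θ₀ (Z i ω) + 2 * K * η := by
        intro i _
        have hlip := lip_min_sq (a := Z i ω - grid j) (b := Z i ω - θ₀) (c := K) hK.le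
        rw [show Z i ω - grid j - (Z i ω - θ₀) = θ₀ - grid j by ring] at hlip
        have h2 : |min ((Z i ω - grid j) ^ 2) (K ^ 2) - min ((Z i ω - θ₀) ^ 2) (K ^ 2)|
            ≤ 2 * K * η :=
          hlip.trans (mul_le_mul_of_nonneg_left hdist (by positivity))
        have h3 := (abs_le.mp h2).2
        simp only [hgθdef]
        linarith
      have hsum : ∑ i ∈ Finset.Icc 1 l, gθ (grid j) (Z i ω)
          ≤ (∑ i ∈ Finset.Icc 1 l, gθ θ₀ (Z i ω)) + (l : ℝ) * (2 * K * η) := by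
        calc ∑ i ∈ Finset.Icc 1 l, gθ (grid j) (Z i ω)
            ≤ ∑ i ∈ Finset.Icc 1 l, (gθ θ₀ (Z i ω) + 2 * K * η) := Finset.sum_le_sum hterm
          _ = (∑ i ∈ Finset.Icc 1 l, gθ θ₀ (Z i ω)) + (l : ℝ) * (2 * K * η) := by
              rw [Finset.sum_add_distrib, Finset.sum_const, Nat.card_Icc]
              simp [nsmul_eq_mul]
      have hη2 : (l : ℝ) * (2 * K * η) = s := by
        rw [hηdef, hsdef]
        field_simp
        ring
      refine Set.mem_biUnion (Finset.mem_range.mpr (Nat.lt_succ_of_le hjN)) ?_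
      simp only [Set.mem_setOf_eq]
      have hhalf : -α * L + s = -s := by rw [hsdef]; ring
      linarith
    · left
      push_neg at hcase
      simp only [Set.mem_setOf_eq]
      have hterm : ∀ i ∈ Finset.Icc 1 l, gW (Z i ω) ≤ gθ θ₀ (Z i ω) := by
        intro i _
        have h3 := hmin_nonneg (Z i ω - θ₀)
        rcases le_or_gt K |Z i ω - θ₀| with h | h
        · have hm2 : min ((Z i ω - θ₀) ^ 2) (K ^ 2) = K ^ 2 := by
            refine min_eq_right ?_
            calc K ^ 2 ≤ |Z i ω - θ₀| ^ 2 := pow_le_pow_left₀ hK.le h 2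
              _ = (Z i ω - θ₀) ^ 2 := sq_abs _
          have hind : 0 ≤ (if (m : ℝ) < |Z i ω| then K ^ 2 else 0) := by
            split_ifs
            · positivity
            · exact le_refl 0
          simp only [hgWdef, hgθdef]
          rw [hm2]
          linarith
        · have hz : (m : ℝ) < |Z i ω| := by
            have h1 : |θ₀| ≤ |θ₀ - Z i ω| + |Z i ω| := by
              calc |θ₀| = |θ₀ - Z i ω + Z i ω| := by ring_nf
                _ ≤ |θ₀ - Z i ω| + |Z i ω| := abs_add_le _ _
            have h2 : |θ₀ - Z i ω| = |Z i ω - θ₀| := abs_sub_comm _ _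
            have h4 : T < K + |Z i ω| := by
              rw [h2] at h1
              linarith
            rw [hTdef] at h4
            linarith
          have hind : (if (m : ℝ) < |Z i ω| then K ^ 2 else 0) = K ^ 2 := if_pos hz
          simp only [hgWdef, hgθdef]
          rw [hind]
          linarith
      have hmono := Finset.sum_le_sum hterm
      have hs2 : -α * L ≤ -s := by rw [hsdef]; nlinarith [mul_pos hα hL]
      linarith
  -- combine
  set B : ℕ → Set Ω := fun j => {ω | ∑ i ∈ Finset.Icc 1 l, gθ (grid j) (Z i ω) ≤ -s}
    with hBdef
  set A0 : Set Ω := {ω | ∑ i ∈ Finset.Icc 1 l, gW (Z i ω) ≤ -s} with hA0def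
  have hchain : P {ω | (⨅ θ : ℝ, ∑ i ∈ Finset.Icc 1 l,
        (min ((Z i ω - θ) ^ 2) (K ^ 2) - min ((Z i ω) ^ 2) (K ^ 2))) < -α * L}
      ≤ P A0 + ∑ j ∈ Finset.range (N + 1), P (B j) := by
    refine (measure_mono hsub).trans ?_
    refine (measure_union_le _ _).trans ?_
    exact add_le_add_right (measure_biUnion_finset_le _ _) _
  have hsumne : (∑ j ∈ Finset.range (N + 1), P (B j)) ≠ ⊤ :=
    (ENNReal.sum_lt_top.mpr (fun j _ => measure_lt_top P _)).ne
  have htoReal : (P {ω | (⨅ θ : ℝ, ∑ i ∈ Finset.Icc 1 l,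
        (min ((Z i ω - θ) ^ 2) (K ^ 2) - min ((Z i ω) ^ 2) (K ^ 2))) < -α * L}).toReal
      ≤ (P A0).toReal + ∑ j ∈ Finset.range (N + 1), (P (B j)).toReal := by
    calc (P {ω | (⨅ θ : ℝ, ∑ i ∈ Finset.Icc 1 l,
          (min ((Z i ω - θ) ^ 2) (K ^ 2) - min ((Z i ω) ^ 2) (K ^ 2))) < -α * L}).toReal
        ≤ (P A0 + ∑ j ∈ Finset.range (N + 1), P (B j)).toReal :=
          ENNReal.toReal_mono (ENNReal.add_ne_top.mpr ⟨measure_ne_top _ _, hsumne⟩) hchain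
      _ = (P A0).toReal + (∑ j ∈ Finset.range (N + 1), P (B j)).toReal :=
          ENNReal.toReal_add (measure_ne_top _ _) hsumne
      _ = (P A0).toReal + ∑ j ∈ Finset.range (N + 1), (P (B j)).toReal := by
          rw [ENNReal.toReal_sum (fun j _ => measure_ne_top _ _)]
  have hsumbound : (P A0).toReal + ∑ j ∈ Finset.range (N + 1), (P (B j)).toReal
      ≤ ((N : ℝ) + 2) * Real.exp (-(4 * L)) := by
    have h1 : ∑ j ∈ Finset.range (N + 1), (P (B j)).toReal
        ≤ ((N : ℝ) + 1) * Real.exp (-(4 * L)) := by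
      calc ∑ j ∈ Finset.range (N + 1), (P (B j)).toReal
          ≤ ∑ _j ∈ Finset.range (N + 1), Real.exp (-(4 * L)) :=
            Finset.sum_le_sum (fun j _ => hpoint (grid j))
        _ = ((N : ℝ) + 1) * Real.exp (-(4 * L)) := by
            rw [Finset.sum_const, Finset.card_range, nsmul_eq_mul]
            push_cast
            ring
    have h2 := htail
    linarith
  have hcount : ((N : ℝ) + 2) ≤ C * (n : ℝ) := by
    have h1 : (N : ℝ) < 2 * T / η + 1 := by
      have := Nat.ceil_lt_add_one (div_nonneg (by positivity) hη.le) (R := ℝ)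
        (a := 2 * T / η)
      exact_mod_cast this
    have h2 : 2 * T / η = 8 * K * T * (l : ℝ) / (α * L) := by
      rw [hηdef]
      field_simp
      ring
    have h3 : 8 * K * T * (l : ℝ) / (α * L) ≤ 8 * K * T * (n : ℝ) / (α * Real.log 2) := by
      apply div_le_div₀ (by positivity) ?_ (by positivity) ?_
      · have : (0:ℝ) ≤ 8 * K * T := by positivity
        exact mul_le_mul_of_nonneg_left hlrn this
      · exact mul_le_mul_of_nonneg_left hL2 hα.le
    have h4 : 8 * K * T * (n : ℝ) / (α * Real.log 2)
        = (8 * K * T / (α * Real.log 2)) * (n : ℝ) := by ring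
    have h5 : (3 : ℝ) ≤ 3 * (n : ℝ) := by nlinarith
    have hCn : C * (n : ℝ) = (8 * K * T / (α * Real.log 2)) * (n : ℝ) + 3 * (n : ℝ) := by
      rw [hCdef]; ring
    rw [hCn]
    linarith
  have hrpow : Real.exp (-(4 * L)) = (n : ℝ) ^ (-(4 : ℝ)) := by
    rw [Real.rpow_def_of_pos hn0, hLdef]
    ring_nf
  have hfinal : ((N : ℝ) + 2) * Real.exp (-(4 * L)) ≤ C * (n : ℝ) ^ (-(2 + 1 : ℝ)) := by
    have hmul : (n : ℝ) * (n : ℝ) ^ (-(4 : ℝ)) = (n : ℝ) ^ (-(2 + 1 : ℝ)) := by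
      have h := Real.rpow_add hn0 1 (-4)
      rw [Real.rpow_one] at h
      rw [← h]
      norm_num
    calc ((N : ℝ) + 2) * Real.exp (-(4 * L))
        ≤ (C * (n : ℝ)) * Real.exp (-(4 * L)) :=
          mul_le_mul_of_nonneg_right hcount (Real.exp_nonneg _)
      _ = C * ((n : ℝ) * (n : ℝ) ^ (-(4 : ℝ))) := by rw [hrpow]; ring
      _ = C * (n : ℝ) ^ (-(2 + 1 : ℝ)) := by rw [hmul]
  exact htoReal.trans (hsumbound.trans hfinal)
end

section
/- Assume conditions (A1) and (A2) hold for the biweight loss with parameter K. Let Z'_1, Z'_2, … be an independent copy of the noise sequence Z_1, Z_2, … and let S'_l(θ) = Σ_{i=1}^l [γ(Z'_i − θ) − γ(Z'_i)]. Then for any Δ > 0 there exist strictly positive constants C₁, C₂ and α such that for every l ≥ 1, P( inf_{θ∈ℝ} { S_l(θ) + S'_l(θ−Δ) } ≤ lα ) ≤ C₁ exp(−C₂ l). -/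
open MeasureTheory ProbabilityTheory



section Aux
variable {Ω : Type*} [MeasurableSpace Ω]

lemma integrable_of_bdd {P : Measure Ω} [IsProbabilityMeasure P] {X : Ω → ℝ} (hX : Measurable X)
    {B : ℝ} (hbdd : ∀ ω, |X ω| ≤ B) : Integrable X P :=
  (integrable_const B).mono' hX.aestronglyMeasurable
    (Filter.Eventually.of_forall fun ω => by simpa using hbdd ω)

lemma abs_integral_le_of_bdd {P : Measure Ω} [IsProbabilityMeasure P] {X : Ω → ℝ}
    (hX : Measurable X) {B : ℝ} (hbdd : ∀ ω, |X ω| ≤ B) : |∫ ω, X ω ∂P| ≤ B := by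
  calc |∫ ω, X ω ∂P| ≤ ∫ ω, |X ω| ∂P := by simpa using norm_integral_le_integral_norm X (μ := P)
    _ ≤ ∫ _ω, B ∂P := integral_mono (integrable_of_bdd hX hbdd).abs (integrable_const B)
        (fun ω => hbdd ω)
    _ = B := by simp

lemma mgf_le_of_bdd {P : Measure Ω} [IsProbabilityMeasure P] {X : Ω → ℝ} (hX : Measurable X)
    {B : ℝ} (hB : 0 < B) (hbdd : ∀ ω, |X ω| ≤ B) (hmean : ∫ ω, X ω ∂P = 0) (t : ℝ) :
    mgf X P t ≤ Real.exp (t ^ 2 * B ^ 2 / 2) := by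
  have hint : Integrable X P := integrable_of_bdd hX hbdd
  set c1 := Real.exp (-(t * B)) with hc1
  set c2 := Real.exp (t * B) with hc2
  have key : ∀ ω, Real.exp (t * X ω) ≤ (c1 + c2) / 2 + X ω * ((c2 - c1) / (2 * B)) := by
    intro ω
    have hy := abs_le.1 (hbdd ω)
    set y := X ω with hyy
    have ha : (0:ℝ) ≤ (B - y) / (2 * B) := div_nonneg (by linarith [hy.2]) (by linarith)
    have hb : (0:ℝ) ≤ (B + y) / (2 * B) := div_nonneg (by linarith [hy.1]) (by linarith)
    have hab : (B - y) / (2 * B) + (B + y) / (2 * B) = 1 := by field_simp; ring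
    have h2 := convexOn_exp.2 (Set.mem_univ (-(t * B))) (Set.mem_univ (t * B)) ha hb hab
    have h1 : ((B - y) / (2 * B)) • (-(t * B)) + ((B + y) / (2 * B)) • (t * B) = t * y := by
      rw [smul_eq_mul, smul_eq_mul]; field_simp; ring
    rw [h1] at h2
    refine h2.trans_eq ?_
    rw [smul_eq_mul, smul_eq_mul, ← hc1, ← hc2]
    field_simp
    ring
  have hintexp : Integrable (fun ω => Real.exp (t * X ω)) P := by
    refine integrable_of_bdd (by fun_prop) (B := Real.exp (|t| * B)) fun ω => ?_
    rw [abs_of_nonneg (Real.exp_pos _).le]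
    refine Real.exp_le_exp.2 ?_
    calc t * X ω ≤ |t * X ω| := le_abs_self _
      _ = |t| * |X ω| := abs_mul _ _
      _ ≤ |t| * B := by gcongr; exact hbdd ω
  have hintR : Integrable (fun ω => (c1 + c2) / 2 + X ω * ((c2 - c1) / (2 * B))) P :=
    (integrable_const _).add (hint.mul_const _)
  have : mgf X P t ≤ ∫ ω, ((c1 + c2) / 2 + X ω * ((c2 - c1) / (2 * B))) ∂P :=
    integral_mono hintexp hintR key
  refine this.trans ?_
  rw [integral_add (integrable_const _) (hint.mul_const _), integral_const,
    integral_mul_const _ _, hmean]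
  simp only [probReal_univ, one_smul, zero_mul, add_zero]
  have : (c1 + c2) / 2 = Real.cosh (t * B) := by rw [Real.cosh_eq]; ring
  rw [this]
  calc Real.cosh (t * B) ≤ Real.exp ((t * B) ^ 2 / 2) := Real.cosh_le_exp_half_sq _
    _ = Real.exp (t ^ 2 * B ^ 2 / 2) := by ring_nf

end Aux


/-- The increment of the biweight loss. -/
noncomputable def biwD (K θ z : ℝ) : ℝ := min ((z - θ) ^ 2) (K ^ 2) - min (z ^ 2) (K ^ 2)

/-- The auxiliary variable used for large `θ`. -/
noncomputable def biwY (K z : ℝ) : ℝ := (if |z| ≤ K then K ^ 2 else 0) - min (z ^ 2) (K ^ 2)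

lemma abs_min_sub_min (x y c : ℝ) : |min x c - min y c| ≤ |x - y| := by
  rcases le_total x c with h | h <;> rcases le_total y c with h' | h'
  · rw [min_eq_left h, min_eq_left h']
  · rw [min_eq_left h, min_eq_right h', abs_of_nonpos (by linarith), abs_sub_comm,
      abs_of_nonneg (by linarith)]
    linarith
  · rw [min_eq_right h, min_eq_left h', abs_of_nonneg (by linarith),
      abs_of_nonneg (by linarith)]
    linarith
  · rw [min_eq_right h, min_eq_right h']
    simp [abs_nonneg]

lemma min_sq_eq (K a : ℝ) (hK : 0 ≤ K) : min (a ^ 2) (K ^ 2) = (min |a| K) ^ 2 := by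
  rcases le_total |a| K with h | h
  · rw [min_eq_left h, ← sq_abs a, min_eq_left (by nlinarith [abs_nonneg a])]
  · rw [min_eq_right h, ← sq_abs a, min_eq_right (by nlinarith [abs_nonneg a])]

lemma gK_lipschitz (K a b : ℝ) (hK : 0 ≤ K) :
    |min (a ^ 2) (K ^ 2) - min (b ^ 2) (K ^ 2)| ≤ 2 * K * |a - b| := by
  rw [min_sq_eq K a hK, min_sq_eq K b hK]
  set u := min |a| K with hu
  set v := min |b| K with hv
  have hu0 : 0 ≤ u := le_min (abs_nonneg a) hK
  have hv0 : 0 ≤ v := le_min (abs_nonneg b) hK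
  have huK : u ≤ K := min_le_right _ _
  have hvK : v ≤ K := min_le_right _ _
  have h1 : |u ^ 2 - v ^ 2| = |u + v| * |u - v| := by
    rw [← abs_mul]; congr 1; ring
  rw [h1]
  have h2 : |u - v| ≤ |a - b| := by
    calc |u - v| ≤ abs (|a| - |b|) := abs_min_sub_min _ _ _
      _ ≤ |a - b| := abs_abs_sub_abs_le_abs_sub a b
  have h3 : |u + v| ≤ 2 * K := by
    rw [abs_of_nonneg (by linarith)]; linarith
  calc |u + v| * |u - v| ≤ (2 * K) * |a - b| :=
    mul_le_mul h3 h2 (abs_nonneg _) (by linarith)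
  _ = 2 * K * |a - b| := rfl

lemma gK_nonneg (K a : ℝ) : 0 ≤ min (a ^ 2) (K ^ 2) := le_min (sq_nonneg a) (sq_nonneg K)
lemma gK_le (K a : ℝ) : min (a ^ 2) (K ^ 2) ≤ K ^ 2 := min_le_right _ _

lemma biwD_abs_le (K θ z : ℝ) : |biwD K θ z| ≤ K ^ 2 := by
  have h1 := gK_nonneg K (z - θ); have h2 := gK_le K (z - θ)
  have h3 := gK_nonneg K z; have h4 := gK_le K z
  rw [biwD, abs_le]; constructor <;> linarith

lemma biwD_measurable (K θ : ℝ) : Measurable (biwD K θ) :=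
  (((measurable_id.sub_const θ).pow_const 2).min measurable_const).sub
    ((measurable_id.pow_const 2).min measurable_const)

lemma biwD_lipschitz (K θ θ' z : ℝ) (hK : 0 ≤ K) :
    |biwD K θ z - biwD K θ' z| ≤ 2 * K * |θ - θ'| := by
  have := gK_lipschitz K (z - θ) (z - θ') hK
  have h2 : |(z - θ) - (z - θ')| = |θ - θ'| := by rw [abs_sub_comm]; congr 1; ring
  rw [h2] at this
  simpa [biwD, sub_sub_sub_cancel_right] using this

lemma biwY_abs_le (K z : ℝ) : |biwY K z| ≤ K ^ 2 := by
  have h3 := gK_nonneg K z; have h4 := gK_le K z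
  have h5 : (0:ℝ) ≤ (if |z| ≤ K then K ^ 2 else 0) := by positivity
  have h6 : (if |z| ≤ K then K ^ 2 else 0) ≤ K ^ 2 := by
    split <;> [exact le_refl _; positivity]
  rw [biwY, abs_le]; constructor <;> linarith

lemma biwY_measurable (K : ℝ) : Measurable (biwY K) := by
  unfold biwY
  exact (Measurable.ite (measurableSet_le (measurable_id.abs) measurable_const)
    measurable_const measurable_const).sub
    ((measurable_id.pow_const 2).min measurable_const)

lemma biwY_le_biwD (K θ z : ℝ) (hK : 0 ≤ K) (hθ : 2 * K ≤ |θ|) : biwY K z ≤ biwD K θ z := by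
  rw [biwY, biwD]
  have : (if |z| ≤ K then K ^ 2 else 0) ≤ min ((z - θ) ^ 2) (K ^ 2) := by
    split
    · rename_i h
      refine le_min ?_ (le_refl _)
      have habs : K ≤ |z - θ| := by
        have := abs_sub_abs_le_abs_sub θ z
        rw [abs_sub_comm] at this
        linarith
      calc K ^ 2 = K * K := sq K
        _ ≤ |z - θ| * |z - θ| := mul_le_mul habs habs hK (abs_nonneg _)
        _ = (z - θ) ^ 2 := by rw [← abs_mul, ← sq, abs_of_nonneg (sq_nonneg _)]
    · exact gK_nonneg K (z - θ)
  linarith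

lemma min_split (K z : ℝ) (hK : 0 ≤ K) :
    min (z ^ 2) (K ^ 2) = (if |z| ≤ K then z ^ 2 else 0) + (if |z| ≤ K then 0 else K ^ 2) := by
  by_cases h : |z| ≤ K
  · rw [if_pos h, if_pos h, add_zero, min_eq_left (by nlinarith [abs_nonneg z, sq_abs z])]
  · push_neg at h
    rw [if_neg (not_le.2 h), if_neg (not_le.2 h), zero_add,
      min_eq_right (by nlinarith [abs_nonneg z, sq_abs z])]

lemma chernoff_lower {Ω : Type*} [MeasurableSpace Ω] {ι : Type*} (P : Measure Ω)
    [IsProbabilityMeasure P] (X : ι → Ω → ℝ)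
    (hindep : iIndepFun X P)
    (hmeas : ∀ i, Measurable (X i)) (B : ℝ) (hB : 0 < B)
    (hbdd : ∀ i ω, |X i ω| ≤ B) (S : Finset ι) (ε : ℝ) (hε : 0 < ε)
    (c : ℝ) (hc : c ≤ (∑ i ∈ S, ∫ ω, X i ω ∂P) - S.card * ε) :
    (P {ω | ∑ i ∈ S, X i ω ≤ c}).toReal ≤ Real.exp (-(S.card : ℝ) * ε ^ 2 / (8 * B ^ 2)) := by
  classical
  set m : ι → ℝ := fun i => ∫ ω, X i ω ∂P with hm
  set Y : ι → Ω → ℝ := fun i => (fun x => x - m i) ∘ X i with hY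
  have hYmeas : ∀ i, Measurable (Y i) := fun i => (hmeas i).sub measurable_const
  have hYindep : iIndepFun Y P :=
    hindep.comp (fun i x => x - m i) (fun i => measurable_id.sub measurable_const)
  have hYbdd : ∀ i ω, |Y i ω| ≤ 2 * B := by
    intro i ω
    have h1 := hbdd i ω
    have h2 := abs_integral_le_of_bdd (P := P) (hmeas i) (hbdd i)
    calc |Y i ω| = |X i ω - m i| := rfl
      _ ≤ |X i ω| + |m i| := abs_sub _ _
      _ ≤ 2 * B := by linarith
  have hYmean : ∀ i, ∫ ω, Y i ω ∂P = 0 := by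
    intro i
    have : ∫ ω, Y i ω ∂P = (∫ ω, X i ω ∂P) - ∫ _ω, m i ∂P :=
      integral_sub (integrable_of_bdd (P := P) (hmeas i) (hbdd i)) (integrable_const _)
    simp [this, hm]
  set t : ℝ := -(ε / (4 * B ^ 2)) with ht
  have htneg : t ≤ 0 := by
    have : 0 ≤ ε / (4 * B ^ 2) := by positivity
    simp only [ht]; linarith
  have hYint_exp : ∀ i ∈ S, Integrable (fun ω => Real.exp (t * Y i ω)) P := by
    intro i _
    refine integrable_of_bdd (by fun_prop) (B := Real.exp (|t| * (2 * B))) fun ω => ?_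
    rw [abs_of_nonneg (Real.exp_pos _).le]
    refine Real.exp_le_exp.2 ?_
    calc t * Y i ω ≤ |t * Y i ω| := le_abs_self _
      _ = |t| * |Y i ω| := abs_mul _ _
      _ ≤ |t| * (2 * B) := by gcongr; exact hYbdd i ω
  have hintsum : Integrable (fun ω => Real.exp (t * (∑ i ∈ S, Y i) ω)) P :=
    hYindep.integrable_exp_mul_sum hYmeas hYint_exp
  have hsub : {ω | ∑ i ∈ S, X i ω ≤ c} ⊆ {ω | (∑ i ∈ S, Y i) ω ≤ -(S.card * ε)} := by
    intro ω hω
    simp only [Set.mem_setOf_eq] at hω ⊢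
    have hsumY : (∑ i ∈ S, Y i) ω = (∑ i ∈ S, X i ω) - ∑ i ∈ S, m i := by
      rw [Finset.sum_apply, ← Finset.sum_sub_distrib]
      rfl
    rw [hsumY]
    have hms : ∑ i ∈ S, m i = ∑ i ∈ S, ∫ ω, X i ω ∂P := rfl
    linarith
  have hbound := measure_le_le_exp_mul_mgf (μ := P) (X := ∑ i ∈ S, Y i)
    (-(S.card * ε)) htneg hintsum
  have hmgf : mgf (∑ i ∈ S, Y i) P t ≤ Real.exp (S.card * (t ^ 2 * (2 * B) ^ 2 / 2)) := by
    rw [hYindep.mgf_sum hYmeas S]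
    calc ∏ i ∈ S, mgf (Y i) P t ≤ ∏ _i ∈ S, Real.exp (t ^ 2 * (2 * B) ^ 2 / 2) :=
        Finset.prod_le_prod (fun i _ => mgf_nonneg)
          (fun i _ => mgf_le_of_bdd (hYmeas i) (by linarith) (hYbdd i) (hYmean i) t)
      _ = Real.exp (S.card * (t ^ 2 * (2 * B) ^ 2 / 2)) := by
        rw [Finset.prod_const, ← Real.exp_nat_mul]
  calc (P {ω | ∑ i ∈ S, X i ω ≤ c}).toReal
      ≤ (P {ω | (∑ i ∈ S, Y i) ω ≤ -(S.card * ε)}).toReal :=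
        ENNReal.toReal_mono (measure_ne_top _ _) (measure_mono hsub)
    _ ≤ Real.exp (-t * -(S.card * ε)) * mgf (∑ i ∈ S, Y i) P t := hbound
    _ ≤ Real.exp (-t * -(S.card * ε)) * Real.exp (S.card * (t ^ 2 * (2 * B) ^ 2 / 2)) :=
        mul_le_mul_of_nonneg_left hmgf (Real.exp_pos _).le
    _ = Real.exp (-(S.card : ℝ) * ε ^ 2 / (8 * B ^ 2)) := by
        rw [← Real.exp_add]
        congr 1
        have hB2 : (B : ℝ) ^ 2 ≠ 0 := by positivity
        rw [ht]
        field_simp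
        ring

lemma integral_biwY {Ω : Type*} [MeasurableSpace Ω] (P : Measure Ω) [IsProbabilityMeasure P]
    {K : ℝ} (hK : 0 < K) (W : Ω → ℝ) (hW : Measurable W) :
    ∫ ω, biwY K (W ω) ∂P =
      K ^ 2 * (1 - 2 * (P {ω | K < |W ω|}).toReal) -
        ∫ ω, (if |W ω| ≤ K then (W ω) ^ 2 else 0) ∂P := by
  have hsle : MeasurableSet {ω | |W ω| ≤ K} := measurableSet_le hW.abs measurable_const
  have hslt : MeasurableSet {ω | K < |W ω|} := measurableSet_lt measurable_const hW.abs
  have hint1 : Integrable (fun ω => if |W ω| ≤ K then K ^ 2 else (0:ℝ)) P := by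
    refine integrable_of_bdd (Measurable.ite hsle measurable_const measurable_const)
      (B := K ^ 2) fun ω => ?_
    split <;> simp [abs_of_nonneg, sq_nonneg, le_of_lt hK] <;> positivity
  have hint2 : Integrable (fun ω => if |W ω| ≤ K then (W ω) ^ 2 else (0:ℝ)) P := by
    refine integrable_of_bdd (Measurable.ite hsle (hW.pow_const 2) measurable_const)
      (B := K ^ 2) fun ω => ?_
    split
    · rename_i h
      rw [abs_of_nonneg (sq_nonneg _), ← sq_abs]
      nlinarith [abs_nonneg (W ω)]
    · simp; positivity
  have hint3 : Integrable (fun ω => if |W ω| ≤ K then (0:ℝ) else K ^ 2) P := by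
    refine integrable_of_bdd (Measurable.ite hsle measurable_const measurable_const)
      (B := K ^ 2) fun ω => ?_
    split <;> simp [abs_of_nonneg, sq_nonneg] <;> positivity
  have e1 : ∫ ω, (if |W ω| ≤ K then K ^ 2 else (0:ℝ)) ∂P =
      (P {ω | |W ω| ≤ K}).toReal * K ^ 2 := by
    have : (fun ω => if |W ω| ≤ K then K ^ 2 else (0:ℝ)) =
        Set.indicator {ω | |W ω| ≤ K} (fun _ => K ^ 2) := by
      ext ω; simp [Set.indicator_apply, Set.mem_setOf_eq]
    rw [this, integral_indicator_const _ hsle, smul_eq_mul, measureReal_def]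
  have e3 : ∫ ω, (if |W ω| ≤ K then (0:ℝ) else K ^ 2) ∂P =
      (P {ω | K < |W ω|}).toReal * K ^ 2 := by
    have : (fun ω => if |W ω| ≤ K then (0:ℝ) else K ^ 2) =
        Set.indicator {ω | K < |W ω|} (fun _ => K ^ 2) := by
      ext ω
      by_cases h : |W ω| ≤ K <;>
        simp [Set.indicator_apply, Set.mem_setOf_eq, h, not_lt.2, not_le.1]
    rw [this, integral_indicator_const _ hslt, smul_eq_mul, measureReal_def]
  have ecompl : (P {ω | |W ω| ≤ K}).toReal = 1 - (P {ω | K < |W ω|}).toReal := by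
    have hset : {ω | |W ω| ≤ K} = {ω | K < |W ω|}ᶜ := by
      ext ω; simp [Set.mem_setOf_eq, not_lt]
    rw [hset, prob_compl_eq_one_sub hslt,
      ENNReal.toReal_sub_of_le prob_le_one ENNReal.one_ne_top, ENNReal.toReal_one]
  have emin : ∫ ω, min ((W ω) ^ 2) (K ^ 2) ∂P =
      (∫ ω, (if |W ω| ≤ K then (W ω) ^ 2 else (0:ℝ)) ∂P) +
        (P {ω | K < |W ω|}).toReal * K ^ 2 := by
    have : (fun ω => min ((W ω) ^ 2) (K ^ 2)) = fun ω =>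
        (if |W ω| ≤ K then (W ω) ^ 2 else 0) + (if |W ω| ≤ K then (0:ℝ) else K ^ 2) := by
      ext ω; exact min_split K (W ω) hK.le
    rw [this, integral_add hint2 hint3, e3]
  have : ∫ ω, biwY K (W ω) ∂P =
      (∫ ω, (if |W ω| ≤ K then K ^ 2 else (0:ℝ)) ∂P) - ∫ ω, min ((W ω) ^ 2) (K ^ 2) ∂P := by
    refine integral_sub hint1 (integrable_of_bdd ((hW.pow_const 2).min measurable_const)
      (B := K ^ 2) fun ω => ?_)
    rw [abs_of_nonneg (le_min (sq_nonneg _) (sq_nonneg _))]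
    exact min_le_right _ _
  rw [this, emin, e1, ecompl]
  ring

lemma pair_concentration {Ω : Type*} [MeasurableSpace Ω] (P : Measure Ω)
    [IsProbabilityMeasure P] (Z Z' : ℕ → Ω → ℝ)
    (hZmeas : ∀ i, Measurable (Z i)) (hZ'meas : ∀ i, Measurable (Z' i))
    (hindep : iIndepFun (Sum.elim Z Z') P)
    (hZident : ∀ i, IdentDistrib (Z i) (Z 0) P P)
    (hZ'ident : ∀ i, IdentDistrib (Z' i) (Z 0) P P)
    {K : ℝ} (hK : 0 < K) (f g : ℝ → ℝ) (hf : Measurable f) (hg : Measurable g)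
    (hfb : ∀ z, |f z| ≤ K ^ 2) (hgb : ∀ z, |g z| ≤ K ^ 2)
    (l : ℕ) (ε : ℝ) (hε : 0 < ε) (c : ℝ)
    (hc : c ≤ (l : ℝ) * (∫ ω, f (Z 0 ω) ∂P) + (l : ℝ) * (∫ ω, g (Z 0 ω) ∂P) -
      ((l : ℝ) + (l : ℝ)) * ε) :
    (P {ω | (∑ i ∈ Finset.Icc 1 l, f (Z i ω)) + ∑ i ∈ Finset.Icc 1 l, g (Z' i ω) ≤ c}).toReal
      ≤ Real.exp (-((l : ℝ) + (l : ℝ)) * ε ^ 2 / (8 * (K ^ 2) ^ 2)) := by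
  classical
  set X : ℕ ⊕ ℕ → Ω → ℝ :=
    fun s => (Sum.elim (fun _ : ℕ => f) (fun _ : ℕ => g) s) ∘ (Sum.elim Z Z' s) with hX
  have hmeasX : ∀ s, Measurable (X s) := by
    intro s; cases s with
    | inl i => exact hf.comp (hZmeas i)
    | inr i => exact hg.comp (hZ'meas i)
  have hindepX : iIndepFun X P :=
    hindep.comp _ (fun s => by cases s with
      | inl i => exact hf
      | inr i => exact hg)
  have hbddX : ∀ s ω, |X s ω| ≤ K ^ 2 := by
    intro s ω; cases s with
    | inl i => exact hfb (Z i ω)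
    | inr i => exact hgb (Z' i ω)
  set S : Finset (ℕ ⊕ ℕ) := (Finset.Icc 1 l).disjSum (Finset.Icc 1 l) with hS
  have hScard : S.card = l + l := by simp [hS, Finset.card_disjSum, Nat.card_Icc]
  have hev : ∀ ω, (∑ s ∈ S, X s ω) =
      (∑ i ∈ Finset.Icc 1 l, f (Z i ω)) + ∑ i ∈ Finset.Icc 1 l, g (Z' i ω) := by
    intro ω
    rw [hS, Finset.sum_disjSum]
    rfl
  have hmean : (∑ s ∈ S, ∫ ω, X s ω ∂P) =
      (l : ℝ) * (∫ ω, f (Z 0 ω) ∂P) + (l : ℝ) * (∫ ω, g (Z 0 ω) ∂P) := by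
    have h1 : ∀ i ∈ Finset.Icc 1 l, ∫ ω, X (Sum.inl i) ω ∂P = ∫ ω, f (Z 0 ω) ∂P :=
      fun i _ => ((hZident i).comp hf).integral_eq
    have h2 : ∀ i ∈ Finset.Icc 1 l, ∫ ω, X (Sum.inr i) ω ∂P = ∫ ω, g (Z 0 ω) ∂P :=
      fun i _ => ((hZ'ident i).comp hg).integral_eq
    rw [hS, Finset.sum_disjSum, Finset.sum_congr rfl h1, Finset.sum_congr rfl h2,
      Finset.sum_const, Finset.sum_const, Nat.card_Icc]
    simp [nsmul_eq_mul]
  have hsetEq : {ω | (∑ i ∈ Finset.Icc 1 l, f (Z i ω)) + ∑ i ∈ Finset.Icc 1 l, g (Z' i ω) ≤ c}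
      = {ω | ∑ s ∈ S, X s ω ≤ c} := by
    ext ω; rw [Set.mem_setOf_eq, Set.mem_setOf_eq, hev]
  have hc' : c ≤ (∑ s ∈ S, ∫ ω, X s ω ∂P) - S.card * ε := by
    rw [hmean, hScard]; push_cast; linarith
  have := chernoff_lower P X hindepX hmeasX (K ^ 2) (by positivity) hbddX S ε hε c hc'
  rw [hsetEq]
  refine this.trans (le_of_eq ?_)
  rw [hScard]; push_cast; ring_nf

set_option maxHeartbeats 1000000

/-- Lemma 2 of the paper: under conditions (A1) and (A2) for the biweight loss with
parameter `K`, for any `Δ > 0` there are strictly positive constants `C₁, C₂, α` such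
that for every `l ≥ 1`,
`P( inf_θ { S_l(θ) + S'_l(θ−Δ) } ≤ lα ) ≤ C₁ exp(−C₂ l)`,
where `S_l(θ) = Σ_{i=1}^l [min{(Z_i−θ)², K²} − min{Z_i², K²}]` and `S'_l` is the
analogous sum for an independent copy `Z'` of the noise sequence. -/
theorem inf_two_sample_sum_lower_tail
    {Ω : Type*} [MeasurableSpace Ω] (P : Measure Ω) [IsProbabilityMeasure P]
    (K : ℝ) (hK : 0 < K)
    (Z Z' : ℕ → Ω → ℝ)
    (hZmeas : ∀ i, Measurable (Z i)) (hZ'meas : ∀ i, Measurable (Z' i))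
    -- the two sequences together form an independent family, all with the
    -- distribution of `Z 0`
    (hindep : iIndepFun (Sum.elim Z Z') P)
    (hZident : ∀ i, IdentDistrib (Z i) (Z 0) P P)
    (hZ'ident : ∀ i, IdentDistrib (Z' i) (Z 0) P P)
    -- Condition (A1)
    (c₁ c₂ : ℝ) (hc₁ : 0 < c₁) (hc₂ : 0 < c₂)
    (hA1min : ∀ θ : ℝ,
      (∫ ω, min ((Z 0 ω - (0 : ℝ)) ^ 2) (K ^ 2) ∂P) ≤
        ∫ ω, min ((Z 0 ω - θ) ^ 2) (K ^ 2) ∂P)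
    (hA1 : ∀ θ : ℝ,
      (∫ ω, min ((Z 0 ω - (0 : ℝ)) ^ 2) (K ^ 2) ∂P) + min (c₁ * θ ^ 2) c₂ ≤
        ∫ ω, min ((Z 0 ω - θ) ^ 2) (K ^ 2) ∂P)
    -- Condition (A2)
    (hA2 : 0 < K ^ 2 * (1 - 2 * (P {ω | K < |Z 0 ω|}).toReal) -
        ∫ ω, (if |Z 0 ω| ≤ K then (Z 0 ω) ^ 2 else 0) ∂P)
    (Δ : ℝ) (hΔ : 0 < Δ) :
    ∃ C₁ C₂ α : ℝ, 0 < C₁ ∧ 0 < C₂ ∧ 0 < α ∧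
      ∀ l : ℕ, 1 ≤ l →
        (P {ω | (⨅ θ : ℝ,
            ((∑ i ∈ Finset.Icc 1 l,
              (min ((Z i ω - θ) ^ 2) (K ^ 2) - min ((Z i ω) ^ 2) (K ^ 2))) +
             ∑ i ∈ Finset.Icc 1 l,
              (min ((Z' i ω - (θ - Δ)) ^ 2) (K ^ 2) - min ((Z' i ω) ^ 2) (K ^ 2)))) ≤
              (l : ℝ) * α}).toReal ≤ C₁ * Real.exp (-C₂ * l) := by
  classical
  obtain ⟨β, hβdef, hβ⟩ : ∃ β : ℝ, β = K ^ 2 * (1 - 2 * (P {ω | K < |Z 0 ω|}).toReal) -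
      (∫ ω, (if |Z 0 ω| ≤ K then (Z 0 ω) ^ 2 else 0) ∂P) ∧ 0 < β := ⟨_, rfl, hA2⟩
  set m₀ : ℝ := min (c₁ * (Δ / 2) ^ 2) c₂ with hm₀def
  have hm₀ : 0 < m₀ := lt_min (by positivity) hc₂
  set mφ : ℝ := min β (m₀ / 4) with hmφdef
  have hmφ : 0 < mφ := lt_min hβ (by positivity)
  set T : ℝ := 2 * K + Δ with hTdef
  have hTpos : 0 < T := by positivity
  set δ : ℝ := m₀ / (16 * K) with hδdef
  have hδ : 0 < δ := by positivity
  set N : ℕ := ⌈2 * T / δ⌉₊ with hNdef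
  set C₂ : ℝ := min (β ^ 2 / (16 * K ^ 4)) (m₀ ^ 2 / (64 * K ^ 4)) with hC₂def
  have hC₂pos : 0 < C₂ := lt_min (by positivity) (by positivity)
  refine ⟨(N : ℝ) + 2, C₂, mφ / 2, by positivity, hC₂pos, by positivity, ?_⟩
  intro l hl
  have hl1 : (1 : ℝ) ≤ (l : ℝ) := by exact_mod_cast hl
  have hl0 : (0 : ℝ) < (l : ℝ) := by linarith
  -- expectations
  have hEY : ∫ ω, biwY K (Z 0 ω) ∂P = β :=
    (integral_biwY P hK (Z 0) (hZmeas 0)).trans hβdef.symm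
  have hintD : ∀ θ : ℝ, Integrable (fun ω => min ((Z 0 ω - θ) ^ 2) (K ^ 2)) P := by
    intro θ
    refine integrable_of_bdd ((((hZmeas 0).sub_const θ).pow_const 2).min measurable_const)
      (B := K ^ 2) fun ω => ?_
    rw [abs_of_nonneg (le_min (sq_nonneg _) (sq_nonneg _))]
    exact min_le_right _ _
  have hintD0 : Integrable (fun ω => min ((Z 0 ω) ^ 2) (K ^ 2)) P := by
    have h := hintD 0
    simpa using h
  have hED : ∀ θ : ℝ, min (c₁ * θ ^ 2) c₂ ≤ ∫ ω, biwD K θ (Z 0 ω) ∂P := by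
    intro θ
    have h0 := hA1 θ
    simp only [sub_zero] at h0
    have he : ∫ ω, biwD K θ (Z 0 ω) ∂P =
        (∫ ω, min ((Z 0 ω - θ) ^ 2) (K ^ 2) ∂P) - ∫ ω, min ((Z 0 ω) ^ 2) (K ^ 2) ∂P :=
      integral_sub (hintD θ) hintD0
    rw [he]
    linarith
  have hpair : ∀ θ : ℝ, m₀ ≤ min (c₁ * θ ^ 2) c₂ + min (c₁ * (θ - Δ) ^ 2) c₂ := by
    intro θ
    have hnn : ∀ x : ℝ, (0 : ℝ) ≤ min (c₁ * x ^ 2) c₂ := fun x => le_min (by positivity) hc₂.le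
    rcases le_total (Δ / 2) |θ| with h | h
    · have hsq : (Δ / 2) ^ 2 ≤ θ ^ 2 := by
        rw [← sq_abs θ]; exact pow_le_pow_left₀ (by positivity) h 2
      have h1 : m₀ ≤ min (c₁ * θ ^ 2) c₂ := min_le_min (by nlinarith) (le_refl _)
      linarith [hnn (θ - Δ)]
    · have habs : Δ / 2 ≤ |θ - Δ| := by
        have h1 : |Δ| - |θ| ≤ |Δ - θ| := abs_sub_abs_le_abs_sub Δ θ
        rw [abs_of_pos hΔ] at h1
        rw [abs_sub_comm]
        linarith
      have hsq : (Δ / 2) ^ 2 ≤ (θ - Δ) ^ 2 := by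
        rw [← sq_abs (θ - Δ)]; exact pow_le_pow_left₀ (by positivity) habs 2
      have h1 : m₀ ≤ min (c₁ * (θ - Δ) ^ 2) c₂ := min_le_min (by nlinarith) (le_refl _)
      linarith [hnn θ]
  -- grid
  set θg : ℕ → ℝ := fun j => -T + (j : ℝ) * δ with hθg
  -- bad events
  have hPA : (P {ω | (∑ i ∈ Finset.Icc 1 l, biwY K (Z i ω)) +
      ∑ i ∈ Finset.Icc 1 l, biwY K (Z' i ω) ≤ (l : ℝ) * β}).toReal ≤ Real.exp (-C₂ * l) := by
    have h := pair_concentration P Z Z' hZmeas hZ'meas hindep hZident hZ'ident hK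
      (biwY K) (biwY K) (biwY_measurable K) (biwY_measurable K) (biwY_abs_le K) (biwY_abs_le K)
      l (β / 2) (half_pos hβ) ((l : ℝ) * β) (by
        rw [hEY]
        have e : (l : ℝ) * β + (l : ℝ) * β - ((l : ℝ) + (l : ℝ)) * (β / 2) = (l : ℝ) * β := by
          ring
        linarith)
    refine h.trans ?_
    rw [Real.exp_le_exp]
    have hC2l : C₂ ≤ β ^ 2 / (16 * K ^ 4) := min_le_left _ _
    have e : -((l : ℝ) + (l : ℝ)) * (β / 2) ^ 2 / (8 * (K ^ 2) ^ 2) =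
        -(β ^ 2 / (16 * K ^ 4)) * l := by ring
    rw [e]
    have h2 := mul_le_mul_of_nonneg_right hC2l hl0.le
    linarith
  have hPG : ∀ j : ℕ, (P {ω | (∑ i ∈ Finset.Icc 1 l, biwD K (θg j) (Z i ω)) +
      ∑ i ∈ Finset.Icc 1 l, biwD K (θg j - Δ) (Z' i ω) ≤ (l : ℝ) * (m₀ / 2)}).toReal ≤
        Real.exp (-C₂ * l) := by
    intro j
    have h := pair_concentration P Z Z' hZmeas hZ'meas hindep hZident hZ'ident hK
      (biwD K (θg j)) (biwD K (θg j - Δ)) (biwD_measurable K _) (biwD_measurable K _)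
      (biwD_abs_le K _) (biwD_abs_le K _)
      l (m₀ / 4) (by positivity) ((l : ℝ) * (m₀ / 2)) (by
        have hE1 := hED (θg j)
        have hE2 := hED (θg j - Δ)
        have hp := hpair (θg j)
        have hsumE : m₀ ≤ (∫ ω, biwD K (θg j) (Z 0 ω) ∂P) +
            ∫ ω, biwD K (θg j - Δ) (Z 0 ω) ∂P := by linarith
        have h2 := mul_le_mul_of_nonneg_left hsumE hl0.le
        have e : ((l : ℝ) + (l : ℝ)) * (m₀ / 4) = (l : ℝ) * (m₀ / 2) := by ring
        have e2 : (l : ℝ) * ((∫ ω, biwD K (θg j) (Z 0 ω) ∂P) +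
            ∫ ω, biwD K (θg j - Δ) (Z 0 ω) ∂P) =
            (l : ℝ) * (∫ ω, biwD K (θg j) (Z 0 ω) ∂P) +
            (l : ℝ) * (∫ ω, biwD K (θg j - Δ) (Z 0 ω) ∂P) := by ring
        linarith)
    refine h.trans ?_
    rw [Real.exp_le_exp]
    have hC2r : C₂ ≤ m₀ ^ 2 / (64 * K ^ 4) := min_le_right _ _
    have e : -((l : ℝ) + (l : ℝ)) * (m₀ / 4) ^ 2 / (8 * (K ^ 2) ^ 2) =
        -(m₀ ^ 2 / (64 * K ^ 4)) * l := by ring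
    rw [e]
    have h2 := mul_le_mul_of_nonneg_right hC2r hl0.le
    linarith
  -- event inclusion
  set Abad : Set Ω := {ω | (∑ i ∈ Finset.Icc 1 l, biwY K (Z i ω)) +
      ∑ i ∈ Finset.Icc 1 l, biwY K (Z' i ω) ≤ (l : ℝ) * β} with hAbad
  set Gbad : ℕ → Set Ω := fun j => {ω | (∑ i ∈ Finset.Icc 1 l, biwD K (θg j) (Z i ω)) +
      ∑ i ∈ Finset.Icc 1 l, biwD K (θg j - Δ) (Z' i ω) ≤ (l : ℝ) * (m₀ / 2)} with hGbad
  have hsub : {ω | (⨅ θ : ℝ,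
      ((∑ i ∈ Finset.Icc 1 l,
        (min ((Z i ω - θ) ^ 2) (K ^ 2) - min ((Z i ω) ^ 2) (K ^ 2))) +
       ∑ i ∈ Finset.Icc 1 l,
        (min ((Z' i ω - (θ - Δ)) ^ 2) (K ^ 2) - min ((Z' i ω) ^ 2) (K ^ 2)))) ≤
        (l : ℝ) * (mφ / 2)} ⊆ Abad ∪ ⋃ j ∈ Finset.range (N + 1), Gbad j := by
    intro ω hω
    simp only [Set.mem_setOf_eq] at hω
    by_contra hbad
    simp only [Set.mem_union, Set.mem_iUnion, not_or, not_exists] at hbad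
    obtain ⟨hA, hG⟩ := hbad
    have hA' : (l : ℝ) * β < (∑ i ∈ Finset.Icc 1 l, biwY K (Z i ω)) +
        ∑ i ∈ Finset.Icc 1 l, biwY K (Z' i ω) := not_le.1 hA
    have hlow : ∀ θ : ℝ, (l : ℝ) * mφ ≤
        (∑ i ∈ Finset.Icc 1 l,
          (min ((Z i ω - θ) ^ 2) (K ^ 2) - min ((Z i ω) ^ 2) (K ^ 2))) +
         ∑ i ∈ Finset.Icc 1 l,
          (min ((Z' i ω - (θ - Δ)) ^ 2) (K ^ 2) - min ((Z' i ω) ^ 2) (K ^ 2)) := by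
      intro θ
      show (l : ℝ) * mφ ≤ (∑ i ∈ Finset.Icc 1 l, biwD K θ (Z i ω)) +
          ∑ i ∈ Finset.Icc 1 l, biwD K (θ - Δ) (Z' i ω)
      by_cases hout : 2 * K ≤ |θ| ∧ 2 * K ≤ |θ - Δ|
      · have hs1 := Finset.sum_le_sum (fun i (_ : i ∈ Finset.Icc 1 l) =>
          biwY_le_biwD K θ (Z i ω) hK.le hout.1)
        have hs2 := Finset.sum_le_sum (fun i (_ : i ∈ Finset.Icc 1 l) =>
          biwY_le_biwD K (θ - Δ) (Z' i ω) hK.le hout.2)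
        have hmφβ : mφ ≤ β := min_le_left _ _
        have := mul_le_mul_of_nonneg_left hmφβ hl0.le
        linarith
      · rw [not_and_or] at hout
        push_neg at hout
        have hθT : |θ| ≤ T := by
          rcases hout with h | h
          · rw [hTdef]; linarith
          · have h2 : |θ| ≤ |θ - Δ| + |Δ| := by
              calc |θ| = |(θ - Δ) + Δ| := by ring_nf
                _ ≤ |θ - Δ| + |Δ| := abs_add_le _ _
            rw [abs_of_pos hΔ] at h2
            rw [hTdef]; linarith
        set j : ℕ := ⌊(θ + T) / δ⌋₊ with hjdef
        have hθT' : 0 ≤ θ + T := by have := (abs_le.1 hθT).1; linarith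
        have hjle : (j : ℝ) * δ ≤ θ + T := by
          have h := Nat.floor_le (div_nonneg hθT' hδ.le)
          calc (j : ℝ) * δ ≤ ((θ + T) / δ) * δ := mul_le_mul_of_nonneg_right h hδ.le
            _ = θ + T := div_mul_cancel₀ _ hδ.ne'
        have hjlt : θ + T < ((j : ℝ) + 1) * δ := by
          have h := Nat.lt_floor_add_one ((θ + T) / δ)
          have h2 := (div_lt_iff₀ hδ).1 h
          exact h2
        have hjN : j ≤ N := by
          have h1 : ((j : ℝ)) ≤ (N : ℝ) := by
            have ha : ((j : ℝ)) ≤ (θ + T) / δ := Nat.floor_le (div_nonneg hθT' hδ.le)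
            have hb : (θ + T) / δ ≤ 2 * T / δ := by
              refine (div_le_div_iff_of_pos_right hδ).2 ?_
              have := (abs_le.1 hθT).2
              linarith
            have hcN : 2 * T / δ ≤ (N : ℝ) := Nat.le_ceil _
            linarith
          exact_mod_cast h1
        have hjmem : j ∈ Finset.range (N + 1) := Finset.mem_range.2 (Nat.lt_succ_of_le hjN)
        have hGj : (l : ℝ) * (m₀ / 2) < (∑ i ∈ Finset.Icc 1 l, biwD K (θg j) (Z i ω)) +
            ∑ i ∈ Finset.Icc 1 l, biwD K (θg j - Δ) (Z' i ω) := not_le.1 (hG j hjmem)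
        have hθgj : θg j = -T + (j : ℝ) * δ := rfl
        have hjδ : ((j : ℝ) + 1) * δ = (j : ℝ) * δ + δ := by ring
        have hdist : |θ - θg j| ≤ δ := by
          rw [hθgj, abs_of_nonneg (by linarith)]
          linarith
        have hterm1 : ∀ i ∈ Finset.Icc 1 l,
            biwD K (θg j) (Z i ω) - 2 * K * δ ≤ biwD K θ (Z i ω) := by
          intro i _
          have h := biwD_lipschitz K θ (θg j) (Z i ω) hK.le
          have h3 : 2 * K * |θ - θg j| ≤ 2 * K * δ :=
            mul_le_mul_of_nonneg_left hdist (by positivity)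
          have h4 := (abs_le.1 h).1
          linarith
        have hterm2 : ∀ i ∈ Finset.Icc 1 l,
            biwD K (θg j - Δ) (Z' i ω) - 2 * K * δ ≤ biwD K (θ - Δ) (Z' i ω) := by
          intro i _
          have h := biwD_lipschitz K (θ - Δ) (θg j - Δ) (Z' i ω) hK.le
          have he : (θ - Δ) - (θg j - Δ) = θ - θg j := by ring
          rw [he] at h
          have h3 : 2 * K * |θ - θg j| ≤ 2 * K * δ :=
            mul_le_mul_of_nonneg_left hdist (by positivity)
          have h4 := (abs_le.1 h).1
          linarith
        have hsum1 : (∑ i ∈ Finset.Icc 1 l, biwD K (θg j) (Z i ω)) - (l : ℝ) * (2 * K * δ) ≤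
            ∑ i ∈ Finset.Icc 1 l, biwD K θ (Z i ω) := by
          have h := Finset.sum_le_sum hterm1
          rwa [Finset.sum_sub_distrib, Finset.sum_const, Nat.card_Icc, Nat.add_sub_cancel,
            nsmul_eq_mul] at h
        have hsum2 : (∑ i ∈ Finset.Icc 1 l, biwD K (θg j - Δ) (Z' i ω)) -
            (l : ℝ) * (2 * K * δ) ≤ ∑ i ∈ Finset.Icc 1 l, biwD K (θ - Δ) (Z' i ω) := by
          have h := Finset.sum_le_sum hterm2
          rwa [Finset.sum_sub_distrib, Finset.sum_const, Nat.card_Icc, Nat.add_sub_cancel,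
            nsmul_eq_mul] at h
        have h2Kδ : 2 * K * δ = m₀ / 8 := by
          rw [hδdef]
          field_simp
          ring
        have hmφm : mφ ≤ m₀ / 4 := min_le_right _ _
        have hlm := mul_le_mul_of_nonneg_left hmφm hl0.le
        rw [h2Kδ] at hsum1 hsum2
        have e3 : (l : ℝ) * (m₀ / 2) - (l : ℝ) * (m₀ / 8) - (l : ℝ) * (m₀ / 8) =
            (l : ℝ) * (m₀ / 4) := by ring
        linarith
    have hinf : (l : ℝ) * mφ ≤ ⨅ θ : ℝ,
        ((∑ i ∈ Finset.Icc 1 l,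
          (min ((Z i ω - θ) ^ 2) (K ^ 2) - min ((Z i ω) ^ 2) (K ^ 2))) +
         ∑ i ∈ Finset.Icc 1 l,
          (min ((Z' i ω - (θ - Δ)) ^ 2) (K ^ 2) - min ((Z' i ω) ^ 2) (K ^ 2))) :=
      le_ciInf hlow
    have hlt : (l : ℝ) * (mφ / 2) < (l : ℝ) * mφ := by nlinarith [mul_pos hl0 hmφ]
    linarith
  -- probability bound
  have hm1 : P {ω | (⨅ θ : ℝ,
      ((∑ i ∈ Finset.Icc 1 l,
        (min ((Z i ω - θ) ^ 2) (K ^ 2) - min ((Z i ω) ^ 2) (K ^ 2))) +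
       ∑ i ∈ Finset.Icc 1 l,
        (min ((Z' i ω - (θ - Δ)) ^ 2) (K ^ 2) - min ((Z' i ω) ^ 2) (K ^ 2)))) ≤
        (l : ℝ) * (mφ / 2)} ≤ P Abad + ∑ j ∈ Finset.range (N + 1), P (Gbad j) := by
    refine (measure_mono hsub).trans ((measure_union_le _ _).trans ?_)
    gcongr
    exact measure_biUnion_finset_le _ _
  have hsumne : (∑ j ∈ Finset.range (N + 1), P (Gbad j)) ≠ ⊤ :=
    (ENNReal.sum_lt_top.2 (fun j _ => measure_lt_top P _)).ne
  calc (P {ω | (⨅ θ : ℝ,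
      ((∑ i ∈ Finset.Icc 1 l,
        (min ((Z i ω - θ) ^ 2) (K ^ 2) - min ((Z i ω) ^ 2) (K ^ 2))) +
       ∑ i ∈ Finset.Icc 1 l,
        (min ((Z' i ω - (θ - Δ)) ^ 2) (K ^ 2) - min ((Z' i ω) ^ 2) (K ^ 2)))) ≤
        (l : ℝ) * (mφ / 2)}).toReal
      ≤ (P Abad + ∑ j ∈ Finset.range (N + 1), P (Gbad j)).toReal :=
        ENNReal.toReal_mono (ENNReal.add_ne_top.2 ⟨measure_ne_top _ _, hsumne⟩) hm1
    _ = (P Abad).toReal + ∑ j ∈ Finset.range (N + 1), (P (Gbad j)).toReal := by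
        rw [ENNReal.toReal_add (measure_ne_top _ _) hsumne,
          ENNReal.toReal_sum (fun j _ => measure_ne_top _ _)]
    _ ≤ Real.exp (-C₂ * l) + ∑ _j ∈ Finset.range (N + 1), Real.exp (-C₂ * l) :=
        add_le_add hPA (Finset.sum_le_sum fun j _ => hPG j)
    _ = ((N : ℝ) + 2) * Real.exp (-C₂ * l) := by
        rw [Finset.sum_const, Finset.card_range, nsmul_eq_mul]
        push_cast
        ring
end

section
/- Suppose that for each data point y_i, the map θ ↦ γ(y_i;θ) is convex and piecewise quadratic on L intervals. Then for every 1 ≤ t ≤ n, the function θ ↦ Q_t(θ) is piecewise quadratic on at most 2t − 1 + t(L−1) intervals. -/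
open MeasureTheory Finset

/-- `τ : ℕ → ℕ` encodes an element of `S_t`: changepoints
`0 = τ 0 < τ 1 < ⋯ < τ k < t` (with `k = 0` meaning no changepoints). -/
def LastSeg (t k : ℕ) (τ : ℕ → ℕ) : Prop :=
  τ 0 = 0 ∧ τ k < t ∧ ∀ i < k, τ i < τ (i + 1)

/-- `Q_t(θ)`: the minimum penalised cost of segmenting `y_{1:t}` conditional on the
most recent segment having location parameter `θ`. -/
noncomputable def condCost (γ : ℝ → ℝ → ℝ) (y : ℕ → ℝ) (β : ℝ) (t : ℕ) (θ : ℝ) : ℝ :=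
  sInf {c : ℝ | ∃ (k : ℕ) (τ : ℕ → ℕ), LastSeg t k τ ∧
    c = (∑ i ∈ Finset.range k, (segCost γ y (τ i) (τ (i + 1)) + β)) +
        (∑ j ∈ Finset.Ioc (τ k) t, γ (y j) θ) + β}

/-- `f` is piecewise quadratic on (at most) `N` intervals: there are points
`−∞ = a_0 < a_1 < ⋯ < a_{N−1} < a_N = ∞` such that on each `(a_{j}, a_{j+1}]`, `f`
agrees with a polynomial of degree at most `2`. -/
def IsPiecewiseQuad (f : ℝ → ℝ) (N : ℕ) : Prop :=
  ∃ a : ℕ → EReal, a 0 = ⊥ ∧ a N = ⊤ ∧ (∀ j < N, a j < a (j + 1)) ∧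
    ∀ j < N, ∃ c₀ c₁ c₂ : ℝ, ∀ x : ℝ,
      a j < (x : EReal) → (x : EReal) ≤ a (j + 1) → f x = c₀ + c₁ * x + c₂ * x ^ 2

/-- set of possible prefix costs of segmentations whose last changepoint is `s`. -/
def PrefCost (γ : ℝ → ℝ → ℝ) (y : ℕ → ℝ) (β : ℝ) (s : ℕ) : Set ℝ :=
  {c : ℝ | ∃ (k : ℕ) (τ : ℕ → ℕ), τ 0 = 0 ∧ τ k = s ∧ (∀ i < k, τ i < τ (i + 1)) ∧
    c = ∑ i ∈ Finset.range k, (segCost γ y (τ i) (τ (i + 1)) + β)}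

lemma prefCost_nonempty (γ : ℝ → ℝ → ℝ) (y : ℕ → ℝ) (β : ℝ) (s : ℕ) :
    (PrefCost γ y β s).Nonempty :=
  ⟨_, s, id, rfl, rfl, fun i _ => Nat.lt_succ_self i, rfl⟩

lemma prefCost_zero (γ : ℝ → ℝ → ℝ) (y : ℕ → ℝ) (β : ℝ) :
    PrefCost γ y β 0 = {0} := by
  ext c
  constructor
  · rintro ⟨k, τ, h0, hk, hstep, rfl⟩
    have hk0 : k = 0 := by
      by_contra h
      obtain ⟨k', rfl⟩ : ∃ k', k = k' + 1 := ⟨k - 1, by omega⟩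
      have h1 := hstep k' (Nat.lt_succ_self k')
      omega
    simp [hk0]
  · rintro rfl
    exact ⟨0, fun _ => 0, rfl, rfl, fun i h => absurd h (Nat.not_lt_zero i), by simp⟩

lemma prefCost_succ (γ : ℝ → ℝ → ℝ) (y : ℕ → ℝ) (β : ℝ) (s : ℕ) (hs : 1 ≤ s) :
    PrefCost γ y β s =
      ⋃ s' ∈ Finset.range s, (fun c => c + (segCost γ y s' s + β)) '' PrefCost γ y β s' := by
  ext c
  simp only [Set.mem_iUnion, Finset.mem_range, Set.mem_image, exists_prop]
  constructor
  · rintro ⟨k, τ, h0, hk, hstep, rfl⟩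
    have hkpos : k ≠ 0 := by rintro rfl; omega
    obtain ⟨k', rfl⟩ : ∃ k', k = k' + 1 := ⟨k - 1, by omega⟩
    refine ⟨τ k', ?_, _, ⟨k', τ, h0, rfl, fun i hi => hstep i (by omega), rfl⟩, ?_⟩
    · rw [← hk]; exact hstep k' (Nat.lt_succ_self k')
    · rw [Finset.sum_range_succ, hk]
  · rintro ⟨s', hs', c', ⟨k', τ', h0, hk', hstep, rfl⟩, rfl⟩
    classical
    set τn : ℕ → ℕ := fun i => if i = k' + 1 then s else τ' i with hτn
    have hv : ∀ i, i ≤ k' → τn i = τ' i := by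
      intro i hi
      simp only [hτn, if_neg (by omega : ¬ i = k' + 1)]
    have hvk : τn (k' + 1) = s := by simp [hτn]
    refine ⟨k' + 1, τn, by rw [hv 0 (Nat.zero_le _)]; exact h0, hvk, ?_, ?_⟩
    · intro i hi
      rcases Nat.lt_or_ge i k' with h | h
      · rw [hv i (by omega), hv (i+1) (by omega)]
        exact hstep i h
      · have hik : i = k' := by omega
        subst hik
        rw [hv i le_rfl, hvk, hk']
        exact hs'
    · rw [Finset.sum_range_succ, hv k' le_rfl, hvk, hk']
      congr 1
      apply Finset.sum_congr rfl
      intro i hi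
      simp only [Finset.mem_range] at hi
      rw [hv i (by omega), hv (i+1) (by omega)]

lemma prefCost_finite (γ : ℝ → ℝ → ℝ) (y : ℕ → ℝ) (β : ℝ) : ∀ s, (PrefCost γ y β s).Finite := by
  intro s
  induction s using Nat.strong_induction_on with
  | _ s ih =>
    rcases Nat.eq_zero_or_pos s with rfl | hs
    · rw [prefCost_zero]; exact Set.finite_singleton 0
    · rw [prefCost_succ γ y β s hs]
      apply Set.Finite.biUnion (Finset.range s).finite_toSet
      intro s' hs'
      simp only [Finset.coe_sort_coe, Finset.mem_coe, Finset.mem_range] at hs'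
      exact ((ih s' hs').image _)

/-- the optimal prefix cost for last changepoint `s`, plus penalty. -/
noncomputable def BVal (γ : ℝ → ℝ → ℝ) (y : ℕ → ℝ) (β : ℝ) (s : ℕ) : ℝ :=
  sInf (PrefCost γ y β s)

lemma bval_mem (γ : ℝ → ℝ → ℝ) (y : ℕ → ℝ) (β : ℝ) (s : ℕ) :
    BVal γ y β s ∈ PrefCost γ y β s :=
  (prefCost_nonempty γ y β s).csInf_mem (prefCost_finite γ y β s)

lemma bval_le (γ : ℝ → ℝ → ℝ) (y : ℕ → ℝ) (β : ℝ) (s : ℕ) {c : ℝ}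
    (hc : c ∈ PrefCost γ y β s) : BVal γ y β s ≤ c :=
  csInf_le (prefCost_finite γ y β s).bddBelow hc

/-- the candidate cost function with last changepoint `s`. -/
noncomputable def FCand (γ : ℝ → ℝ → ℝ) (y : ℕ → ℝ) (β : ℝ) (t s : ℕ) (θ : ℝ) : ℝ :=
  BVal γ y β s + (∑ j ∈ Finset.Ioc s t, γ (y j) θ) + β

lemma condCost_set_eq (γ : ℝ → ℝ → ℝ) (y : ℕ → ℝ) (β : ℝ) (t : ℕ) (θ : ℝ) :
    {c : ℝ | ∃ (k : ℕ) (τ : ℕ → ℕ), LastSeg t k τ ∧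
      c = (∑ i ∈ Finset.range k, (segCost γ y (τ i) (τ (i + 1)) + β)) +
          (∑ j ∈ Finset.Ioc (τ k) t, γ (y j) θ) + β} =
    ⋃ s ∈ Finset.range t,
      (fun c => c + (∑ j ∈ Finset.Ioc s t, γ (y j) θ) + β) '' PrefCost γ y β s := by
  ext c
  simp only [Set.mem_iUnion, Finset.mem_range, Set.mem_image, exists_prop, Set.mem_setOf_eq]
  constructor
  · rintro ⟨k, τ, ⟨h0, hkt, hstep⟩, rfl⟩
    exact ⟨τ k, hkt, _, ⟨k, τ, h0, rfl, hstep, rfl⟩, rfl⟩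
  · rintro ⟨s, hst, c', ⟨k, τ, h0, hk, hstep, rfl⟩, rfl⟩
    exact ⟨k, τ, ⟨h0, hk ▸ hst, hstep⟩, by rw [hk]⟩

lemma condCost_set_finite (γ : ℝ → ℝ → ℝ) (y : ℕ → ℝ) (β : ℝ) (t : ℕ) (θ : ℝ) :
    {c : ℝ | ∃ (k : ℕ) (τ : ℕ → ℕ), LastSeg t k τ ∧
      c = (∑ i ∈ Finset.range k, (segCost γ y (τ i) (τ (i + 1)) + β)) +
          (∑ j ∈ Finset.Ioc (τ k) t, γ (y j) θ) + β}.Finite := by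
  rw [condCost_set_eq]
  apply Set.Finite.biUnion (Finset.range t).finite_toSet
  intro s _
  exact (prefCost_finite γ y β s).image _

lemma fcand_mem (γ : ℝ → ℝ → ℝ) (y : ℕ → ℝ) (β : ℝ) (t : ℕ) (θ : ℝ) (s : ℕ) (hst : s < t) :
    FCand γ y β t s θ ∈ {c : ℝ | ∃ (k : ℕ) (τ : ℕ → ℕ), LastSeg t k τ ∧
      c = (∑ i ∈ Finset.range k, (segCost γ y (τ i) (τ (i + 1)) + β)) +
          (∑ j ∈ Finset.Ioc (τ k) t, γ (y j) θ) + β} := by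
  rw [condCost_set_eq]
  simp only [Set.mem_iUnion, Finset.mem_range, Set.mem_image, exists_prop]
  exact ⟨s, hst, BVal γ y β s, bval_mem γ y β s, rfl⟩

lemma condCost_le_fcand (γ : ℝ → ℝ → ℝ) (y : ℕ → ℝ) (β : ℝ) (t : ℕ) (θ : ℝ)
    (s : ℕ) (hst : s < t) : condCost γ y β t θ ≤ FCand γ y β t s θ :=
  csInf_le (condCost_set_finite γ y β t θ).bddBelow (fcand_mem γ y β t θ s hst)

lemma condCost_eq_fcand (γ : ℝ → ℝ → ℝ) (y : ℕ → ℝ) (β : ℝ) (t : ℕ) (ht : 1 ≤ t) (θ : ℝ) :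
    ∃ s < t, condCost γ y β t θ = FCand γ y β t s θ := by
  have hne : {c : ℝ | ∃ (k : ℕ) (τ : ℕ → ℕ), LastSeg t k τ ∧
      c = (∑ i ∈ Finset.range k, (segCost γ y (τ i) (τ (i + 1)) + β)) +
          (∑ j ∈ Finset.Ioc (τ k) t, γ (y j) θ) + β}.Nonempty := by
    refine ⟨_, 0, fun _ => 0, ⟨rfl, ht, fun i h => absurd h (Nat.not_lt_zero i)⟩, rfl⟩
  have hmem : condCost γ y β t θ ∈ {c : ℝ | ∃ (k : ℕ) (τ : ℕ → ℕ), LastSeg t k τ ∧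
      c = (∑ i ∈ Finset.range k, (segCost γ y (τ i) (τ (i + 1)) + β)) +
          (∑ j ∈ Finset.Ioc (τ k) t, γ (y j) θ) + β} :=
    hne.csInf_mem (condCost_set_finite γ y β t θ)
  rw [condCost_set_eq] at hmem
  simp only [Set.mem_iUnion, Finset.mem_range, Set.mem_image, exists_prop] at hmem
  obtain ⟨s, hst, c', hc', hc⟩ := hmem
  refine ⟨s, hst, le_antisymm (condCost_le_fcand γ y β t θ s hst) ?_⟩
  have : FCand γ y β t s θ ≤ c' + (∑ j ∈ Finset.Ioc s t, γ (y j) θ) + β := by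
    unfold FCand
    have := bval_le γ y β s hc'
    linarith
  exact hc ▸ this

/-- `f` agrees with a quadratic polynomial on the cell `(u, v]`. -/
def CellQuad (f : ℝ → ℝ) (u v : EReal) : Prop :=
  ∃ c₀ c₁ c₂ : ℝ, ∀ x : ℝ, u < (x : EReal) → (x : EReal) ≤ v → f x = c₀ + c₁ * x + c₂ * x ^ 2

lemma cellQuad_of_empty {f : ℝ → ℝ} {u v : EReal} (h : v ≤ u) : CellQuad f u v :=
  ⟨0, 0, 0, fun _ hx1 hx2 => absurd (hx1.trans_le (hx2.trans h)) (lt_irrefl _)⟩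

lemma CellQuad.mono {f : ℝ → ℝ} {u v u' v' : EReal} (h : CellQuad f u v)
    (hu : u ≤ u') (hv : v' ≤ v) : CellQuad f u' v' := by
  obtain ⟨c₀, c₁, c₂, hc⟩ := h
  exact ⟨c₀, c₁, c₂, fun x hx1 hx2 => hc x (hu.trans_lt hx1) (hx2.trans hv)⟩

lemma CellQuad.congr {f g : ℝ → ℝ} {u v : EReal} (h : CellQuad f u v)
    (hfg : ∀ x : ℝ, u < (x : EReal) → (x : EReal) ≤ v → g x = f x) : CellQuad g u v := by
  obtain ⟨c₀, c₁, c₂, hc⟩ := h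
  exact ⟨c₀, c₁, c₂, fun x hx1 hx2 => (hfg x hx1 hx2).trans (hc x hx1 hx2)⟩

lemma cellQuad_sum {ι : Type*} (S : Finset ι) (f : ι → ℝ → ℝ) {u v : EReal}
    (h : ∀ i ∈ S, CellQuad (f i) u v) : CellQuad (fun x => ∑ i ∈ S, f i x) u v := by
  classical
  induction S using Finset.induction_on with
  | empty => exact ⟨0, 0, 0, fun x _ _ => by simp⟩
  | insert _ _ hni ih =>
    rename_i a S
    obtain ⟨c₀, c₁, c₂, hc⟩ := h a (mem_insert_self a S)
    obtain ⟨d₀, d₁, d₂, hd⟩ := ih fun i hi => h i (mem_insert_of_mem hi)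
    refine ⟨c₀ + d₀, c₁ + d₁, c₂ + d₂, fun x hx1 hx2 => ?_⟩
    have h1 : ∑ i ∈ insert a S, f i x = f a x + ∑ i ∈ S, f i x := Finset.sum_insert hni
    show ∑ i ∈ insert a S, f i x = _
    rw [h1, hc x hx1 hx2, show (∑ i ∈ S, f i x) = d₀ + d₁ * x + d₂ * x ^ 2 from hd x hx1 hx2]
    ring

lemma CellQuad.add_consts {f : ℝ → ℝ} {u v : EReal} (h : CellQuad f u v) (b c : ℝ) :
    CellQuad (fun x => b + f x + c) u v := by
  obtain ⟨c₀, c₁, c₂, hc⟩ := h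
  refine ⟨b + c₀ + c, c₁, c₂, fun x hx1 hx2 => ?_⟩
  show b + f x + c = _
  rw [hc x hx1 hx2]
  ring

/-- generalized monotonicity from one-step monotonicity. -/
lemma mono_of_step {z : ℕ → EReal} {k : ℕ} (h : ∀ j < k, z j ≤ z (j + 1)) :
    ∀ a b, a ≤ b → b ≤ k → z a ≤ z b := by
  intro a b hab hbk
  induction b with
  | zero => interval_cases a; exact le_rfl
  | succ m ih =>
    rcases Nat.lt_or_ge a (m + 1) with h1 | h1
    · exact (ih (by omega) (by omega)).trans (h m (by omega))
    · have : a = m + 1 := by omega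
      subst this; exact le_rfl

/-- Insert one point into a monotone cut sequence. -/
lemma insertPt {k : ℕ} (hk : 1 ≤ k) {z : ℕ → EReal} (hz0 : z 0 = ⊥) (hzk : z k = ⊤)
    (hmono : ∀ j < k, z j ≤ z (j + 1)) (u : EReal) :
    ∃ w : ℕ → EReal, w 0 = ⊥ ∧ w (k + 1) = ⊤ ∧ (∀ j < k + 1, w j ≤ w (j + 1)) ∧
      (∀ j < k + 1, ∃ i < k, z i ≤ w j ∧ w (j + 1) ≤ z (i + 1)) ∧
      (∀ j < k + 1, w (j + 1) ≤ u ∨ u ≤ w j) := by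
  classical
  have hP0 : z 0 ≤ u := by rw [hz0]; exact bot_le
  set i₀ : ℕ := Nat.findGreatest (fun i => z i ≤ u) k with hi₀
  have hi₀k : i₀ ≤ k := Nat.findGreatest_le k
  have hPi₀ : z i₀ ≤ u := by
    have := Nat.findGreatest_spec (P := fun i => z i ≤ u) (m := 0) (Nat.zero_le k) hP0
    simpa [← hi₀] using this
  have hgt : ∀ j, i₀ < j → j ≤ k → u < z j := by
    intro j h1 h2
    have h3 : Nat.findGreatest (fun i => z i ≤ u) k < j := by omega
    have := Nat.findGreatest_is_greatest (P := fun i => z i ≤ u) h3 h2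
    exact lt_of_not_ge this
  set w : ℕ → EReal := fun j => if j ≤ i₀ then z j else if j = i₀ + 1 then u else z (j - 1)
    with hw
  have hwle : ∀ j, j ≤ i₀ → w j = z j := by
    intro j hj; simp only [hw]; rw [if_pos hj]
  have hwu : w (i₀ + 1) = u := by
    simp only [hw]; rw [if_neg (by omega)]; simp
  have hwgt : ∀ j, i₀ + 1 < j → w j = z (j - 1) := by
    intro j hj; simp only [hw]; rw [if_neg (by omega), if_neg (by omega)]
  have hzmono := mono_of_step hmono
  have hwmono : ∀ j < k + 1, w j ≤ w (j + 1) := by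
    intro j hj
    rcases Nat.lt_or_ge j i₀ with h | h
    · rw [hwle j (by omega), hwle (j + 1) (by omega)]; exact hmono j (by omega)
    rcases Nat.eq_or_lt_of_le h with h' | h'
    · rw [hwle j (by omega), show j + 1 = i₀ + 1 by omega, hwu, show j = i₀ by omega]
      exact hPi₀
    rcases Nat.eq_or_lt_of_le h' with h'' | h''
    · rw [show j = i₀ + 1 by omega, hwu, hwgt (i₀ + 2) (by omega),
        show i₀ + 2 - 1 = i₀ + 1 by omega]
      exact le_of_lt (hgt (i₀ + 1) (by omega) (by omega))
    · rw [hwgt j (by omega), hwgt (j + 1) (by omega), show j + 1 - 1 = (j - 1) + 1 by omega]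
      exact hmono (j - 1) (by omega)
  refine ⟨w, by rw [hwle 0 (Nat.zero_le _)]; exact hz0, ?_, hwmono, ?_, ?_⟩
  · rcases Nat.lt_or_ge i₀ k with h | h
    · rw [hwgt (k + 1) (by omega), show k + 1 - 1 = k by omega]; exact hzk
    · have he : i₀ = k := by omega
      rw [show k + 1 = i₀ + 1 by omega, hwu]
      have h2 : z i₀ = ⊤ := by rw [he, hzk]
      rw [h2] at hPi₀
      exact le_antisymm le_top hPi₀
  · intro j hj
    rcases Nat.lt_or_ge j i₀ with h | h
    · exact ⟨j, by omega, le_of_eq (hwle j (by omega)).symm, le_of_eq (hwle (j + 1) (by omega))⟩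
    rcases Nat.eq_or_lt_of_le h with h' | h'
    · rcases Nat.lt_or_ge i₀ k with hik | hik
      · refine ⟨i₀, hik, ?_, ?_⟩
        · rw [hwle j (by omega), show j = i₀ by omega]
        · rw [show j + 1 = i₀ + 1 by omega, hwu]
          exact le_of_lt (hgt (i₀ + 1) (by omega) (by omega))
      · have hik' : i₀ = k := by omega
        refine ⟨k - 1, by omega, ?_, ?_⟩
        · rw [hwle j (by omega)]
          exact hzmono (k - 1) j (by omega) (by omega)
        · rw [show j + 1 = i₀ + 1 by omega, hwu, show k - 1 + 1 = k by omega, hzk]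
          exact le_top
    rcases Nat.eq_or_lt_of_le h' with h'' | h''
    · have hik : i₀ < k := by omega
      refine ⟨i₀, hik, ?_, ?_⟩
      · rw [show j = i₀ + 1 by omega, hwu]; exact hPi₀
      · rw [hwgt (j + 1) (by omega), show j + 1 - 1 = i₀ + 1 by omega]
    · refine ⟨j - 1, by omega, ?_, ?_⟩
      · rw [hwgt j (by omega)]
      · rw [hwgt (j + 1) (by omega), show j + 1 - 1 = (j - 1) + 1 by omega]
  · intro j hj
    rcases Nat.lt_or_ge j (i₀ + 1) with h | h
    · left
      rcases Nat.eq_or_lt_of_le (by omega : j + 1 ≤ i₀ + 1) with h' | h'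
      · rw [h', hwu]
      · rw [hwle (j + 1) (by omega)]
        exact (hzmono (j + 1) i₀ (by omega) (by omega)).trans hPi₀
    · right
      rcases Nat.eq_or_lt_of_le h with h' | h'
      · rw [← h', hwu]
      · rw [hwgt j (by omega)]
        exact le_of_lt (hgt (j - 1) (by omega) (by omega))

/-- Insert `n` points into a monotone cut sequence. -/
lemma insertMany {k : ℕ} (hk : 1 ≤ k) {z : ℕ → EReal} (hz0 : z 0 = ⊥) (hzk : z k = ⊤)
    (hmono : ∀ j < k, z j ≤ z (j + 1)) (n : ℕ) (p : ℕ → EReal) :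
    ∃ w : ℕ → EReal, w 0 = ⊥ ∧ w (k + n) = ⊤ ∧ (∀ j < k + n, w j ≤ w (j + 1)) ∧
      (∀ j < k + n, ∃ i < k, z i ≤ w j ∧ w (j + 1) ≤ z (i + 1)) ∧
      (∀ r < n, ∀ j < k + n, w (j + 1) ≤ p r ∨ p r ≤ w j) := by
  induction n with
  | zero =>
    exact ⟨z, hz0, hzk, hmono, fun j hj => ⟨j, hj, le_rfl, le_rfl⟩,
      fun r hr => absurd hr (Nat.not_lt_zero r)⟩
  | succ n ih =>
    obtain ⟨w, hw0, hwk, hwmono, hwref, hwstra⟩ := ih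
    obtain ⟨v, hv0, hvk, hvmono, hvref, hvstra⟩ := insertPt (by omega) hw0 hwk hwmono (p n)
    rw [show k + n + 1 = k + (n + 1) by omega] at hvk hvmono hvref hvstra
    refine ⟨v, hv0, hvk, hvmono, ?_, ?_⟩
    · intro j hj
      obtain ⟨i, hik, h1, h2⟩ := hvref j hj
      obtain ⟨i', hi'k, h1', h2'⟩ := hwref i hik
      exact ⟨i', hi'k, h1'.trans h1, h2.trans h2'⟩
    · intro r hr j hj
      rcases Nat.lt_or_ge r n with h | h
      · obtain ⟨i, hik, h1, h2⟩ := hvref j hj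
        rcases hwstra r h i hik with h3 | h3
        · exact Or.inl (h2.trans h3)
        · exact Or.inr (h3.trans h1)
      · have : r = n := by omega
        subst this
        exact hvstra j hj

/-- A common refinement grid adapted to a finite family of piecewise-quadratic functions. -/
lemma gridOfFamily (t L : ℕ) (hL : 1 ≤ L) (G : ℕ → ℝ → ℝ)
    (h : ∀ i, 1 ≤ i → i ≤ t → ∃ a : ℕ → EReal, a 0 = ⊥ ∧ a L = ⊤ ∧
      (∀ j < L, a j < a (j + 1)) ∧ ∀ j < L, CellQuad (G i) (a j) (a (j + 1))) :
    ∃ z : ℕ → EReal, z 0 = ⊥ ∧ z (t * (L - 1) + 1) = ⊤ ∧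
      (∀ j < t * (L - 1) + 1, z j ≤ z (j + 1)) ∧
      ∀ i, 1 ≤ i → i ≤ t → ∀ j < t * (L - 1) + 1, CellQuad (G i) (z j) (z (j + 1)) := by
  classical
  induction t with
  | zero =>
    refine ⟨fun j => if j = 0 then ⊥ else ⊤, by simp, by simp, ?_, fun i hi1 hi2 => by omega⟩
    intro j hj
    have : j = 0 := by omega
    subst this
    simp
  | succ t ih =>
    obtain ⟨z, hz0, hzq, hzmono, hzcell⟩ := ih (fun i hi1 hi2 => h i hi1 (by omega))
    obtain ⟨a, ha0, haL, hamono, hacell⟩ := h (t + 1) (by omega) le_rfl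
    obtain ⟨w, hw0, hwk, hwmono, hwref, hwstra⟩ :=
      insertMany (by omega) hz0 hzq hzmono (L - 1) (fun r => a (r + 1))
    have hcnt : t * (L - 1) + 1 + (L - 1) = (t + 1) * (L - 1) + 1 := by
      rw [Nat.succ_mul]; omega
    rw [hcnt] at hwk hwmono hwref hwstra
    refine ⟨w, hw0, hwk, hwmono, ?_⟩
    intro i hi1 hi2 j hj
    rcases Nat.lt_or_ge i (t + 1) with hit | hit
    · obtain ⟨i', hi'q, h1, h2⟩ := hwref j hj
      exact (hzcell i hi1 (by omega) i' hi'q).mono h1 h2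
    · have : i = t + 1 := by omega
      subst this
      rcases le_or_gt (w (j + 1)) (w j) with hempty | hne
      · exact cellQuad_of_empty hempty
      have haP0 : a 0 ≤ w j := ha0 ▸ bot_le
      set r : ℕ := Nat.findGreatest (fun r => a r ≤ w j) L with hr
      have hrL : r ≤ L := Nat.findGreatest_le L
      have har : a r ≤ w j := by
        have := Nat.findGreatest_spec (P := fun r => a r ≤ w j) (m := 0) (Nat.zero_le L) haP0
        simpa [← hr] using this
      have hrLlt : r < L := by
        rcases Nat.eq_or_lt_of_le hrL with h' | h'
        · exfalso
          rw [h', haL] at har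
          exact not_top_lt (lt_of_le_of_lt har hne)
        · exact h'
      have hgt : ∀ s, r < s → s ≤ L → ¬ a s ≤ w j := by
        intro s h1 h2
        have h3 : Nat.findGreatest (fun r => a r ≤ w j) L < s := by omega
        exact Nat.findGreatest_is_greatest (P := fun r => a r ≤ w j) h3 h2
      have hup : w (j + 1) ≤ a (r + 1) := by
        rcases Nat.eq_or_lt_of_le (by omega : r + 1 ≤ L) with h' | h'
        · rw [h', haL]; exact le_top
        · rcases hwstra r (by omega) j hj with h3 | h3
          · exact h3
          · exact absurd h3 (hgt (r + 1) (by omega) (by omega))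
      exact (hacell r hrLlt).mono har hup

lemma sub_inf' {ι : Type*} (s : Finset ι) (hs : s.Nonempty) (c : ℝ) (f : ι → ℝ) :
    c - s.inf' hs f = s.sup' hs (fun i => c - f i) := by
  apply le_antisymm
  · obtain ⟨i, hi, hie⟩ := s.exists_mem_eq_inf' hs f
    rw [hie]
    exact Finset.le_sup' (fun i => c - f i) hi
  · rw [Finset.sup'_le_iff]
    intro i hi
    have := Finset.inf'_le f hi
    linarith

lemma continuous_sup' {ι : Type*} (s : Finset ι) (hs : s.Nonempty) (f : ι → ℝ → ℝ) :
    (∀ i ∈ s, Continuous (f i)) → Continuous (fun x => s.sup' hs (fun i => f i x)) := by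
  classical
  induction hs using Finset.Nonempty.cons_induction with
  | singleton a => intro hf; simpa using hf a (by simp)
  | cons a s ha hs ih =>
    intro hf
    have h1 : (fun x => (Finset.cons a s ha).sup' (Finset.cons_nonempty ha) (fun i => f i x)) =
        fun x => max (f a x) (s.sup' hs (fun i => f i x)) := by
      funext x
      exact Finset.sup'_cons hs (fun i => f i x)
    rw [h1]
    exact (hf a (by simp)).max (ih fun i hi => hf i (by simp [hi]))

/-- The envelope theorem: the pointwise minimum of `m` functions whose pairwise
differences (in increasing index order) are convex, each piecewise quadratic on a
common grid of `q` cells, is piecewise quadratic on `q + 2(m-1)` cells. -/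
lemma env (m : ℕ) (hm : 1 ≤ m) (q : ℕ) (z : ℕ → EReal) (hz0 : z 0 = ⊥) (hzq : z q = ⊤)
    (hzm : ∀ j < q, z j ≤ z (j + 1))
    (F : ℕ → ℝ → ℝ) (E : ℝ → ℝ)
    (hE1 : ∀ θ : ℝ, ∀ s < m, E θ ≤ F s θ)
    (hE2 : ∀ θ : ℝ, ∃ s < m, E θ = F s θ)
    (hdiff : ∀ s r : ℕ, s < r → r < m → ConvexOn ℝ Set.univ (fun θ => F s θ - F r θ))
    (hq : ∀ s < m, ∀ j < q, CellQuad (F s) (z j) (z (j + 1))) :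
    ∃ w : ℕ → EReal, w 0 = ⊥ ∧ w (q + 2 * (m - 1)) = ⊤ ∧
      (∀ j < q + 2 * (m - 1), w j ≤ w (j + 1)) ∧
      (∀ j < q + 2 * (m - 1), ∃ i < q, z i ≤ w j ∧ w (j + 1) ≤ z (i + 1)) ∧
      (∀ j < q + 2 * (m - 1), CellQuad E (w j) (w (j + 1))) := by
  induction m, hm using Nat.le_induction generalizing F E with
  | base =>
    refine ⟨z, hz0, by simpa using hzq, by simpa using hzm,
      fun j hj => ⟨j, by simpa using hj, le_rfl, le_rfl⟩, ?_⟩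
    intro j hj
    simp only [Nat.sub_self, Nat.mul_zero, Nat.add_zero] at hj
    refine (hq 0 (by omega) j hj).congr fun x _ _ => ?_
    obtain ⟨s, hs, he⟩ := hE2 x
    have : s = 0 := by omega
    rw [he, this]
  | succ m hm ih =>
    -- the envelope of the shifted family
    have hne : (Finset.range m).Nonempty := ⟨0, Finset.mem_range.2 (by omega)⟩
    set E' : ℝ → ℝ := fun θ => (Finset.range m).inf' hne (fun s => F (s + 1) θ) with hE'
    have hE1' : ∀ θ : ℝ, ∀ s < m, E' θ ≤ F (s + 1) θ := fun θ s hs =>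
      Finset.inf'_le _ (Finset.mem_range.2 hs)
    have hE2' : ∀ θ : ℝ, ∃ s < m, E' θ = F (s + 1) θ := by
      intro θ
      obtain ⟨s, hs, he⟩ := (Finset.range m).exists_mem_eq_inf' hne (fun s => F (s + 1) θ)
      exact ⟨s, Finset.mem_range.1 hs, he⟩
    have hmin : ∀ θ : ℝ, E θ = min (F 0 θ) (E' θ) := by
      intro θ
      apply le_antisymm
      · apply le_min (hE1 θ 0 (by omega))
        obtain ⟨s, hs, he⟩ := hE2' θ
        rw [he]
        exact hE1 θ (s + 1) (by omega)
      · obtain ⟨s, hs, he⟩ := hE2 θ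
        rcases Nat.eq_zero_or_pos s with rfl | hs0
        · rw [he]; exact min_le_left _ _
        · obtain ⟨s', rfl⟩ : ∃ s', s = s' + 1 := ⟨s - 1, by omega⟩
          rw [he]
          exact (min_le_right _ _).trans (hE1' θ s' (by omega))
    -- the region where candidate 0 is optimal
    set A : Set ℝ := {θ : ℝ | ∀ s < m, F 0 θ ≤ F (s + 1) θ} with hA
    have hAeq : A = ⋂ (s : ℕ) (_ : s < m), {θ : ℝ | F 0 θ - F (s + 1) θ ≤ 0} := by
      ext θ
      simp only [hA, Set.mem_setOf_eq, Set.mem_iInter, sub_nonpos]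
    have hconvA : Convex ℝ A := by
      rw [hAeq]
      refine convex_iInter fun s => convex_iInter fun hs => ?_
      have := (hdiff 0 (s + 1) (by omega) (by omega)).convex_le 0
      simpa using this
    have hconts : ∀ s < m, Continuous (fun θ => F 0 θ - F (s + 1) θ) := by
      intro s hs
      exact continuousOn_univ.mp
        ((hdiff 0 (s + 1) (by omega) (by omega)).continuousOn isOpen_univ)
    have hclosedA : IsClosed A := by
      rw [hAeq]
      exact isClosed_iInter fun s => isClosed_iInter fun hs =>
        isClosed_le (hconts s hs) continuous_const
    have hDsup : ∀ θ : ℝ, F 0 θ - E' θ =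
        (Finset.range m).sup' hne (fun s => F 0 θ - F (s + 1) θ) := by
      intro θ
      exact sub_inf' _ hne (F 0 θ) _
    have hcontD : Continuous (fun θ => F 0 θ - E' θ) := by
      have h1 : (fun θ => F 0 θ - E' θ) =
          fun θ => (Finset.range m).sup' hne (fun s => F 0 θ - F (s + 1) θ) := funext hDsup
      rw [h1]
      exact continuous_sup' _ hne _ fun s hs => hconts s (Finset.mem_range.1 hs)
    have hDA : ∀ θ : ℝ, θ ∈ A ↔ F 0 θ - E' θ ≤ 0 := by
      intro θ
      rw [hDsup θ, Finset.sup'_le_iff]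
      constructor
      · intro h s hs
        have := h s (Finset.mem_range.1 hs)
        linarith
      · intro h s hs
        have := h s (Finset.mem_range.2 hs)
        linarith
    set u : EReal := sInf ((fun x : ℝ => (x : EReal)) '' A) with hu
    set v : EReal := sSup ((fun x : ℝ => (x : EReal)) '' A) with hv
    -- pointwise identification of E left of u, inside (u,v], right of v
    have hleft : ∀ x : ℝ, (x : EReal) ≤ u → E x = E' x := by
      intro x hx
      by_cases hxA : x ∈ A
      · have hux : u ≤ (x : EReal) := sInf_le ⟨x, hxA, rfl⟩
        have hxu : (x : EReal) = u := le_antisymm hx hux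
        have hylt : ∀ y : ℝ, y < x → y ∉ A := by
          intro y hy hyA
          have h2 : u ≤ (y : EReal) := sInf_le ⟨y, hyA, rfl⟩
          rw [← hxu] at h2
          exact absurd (EReal.coe_lt_coe_iff.mpr hy) (not_lt.mpr h2)
        have hDpos : ∀ y : ℝ, y < x → 0 ≤ F 0 y - E' y := by
          intro y hy
          have h2 := (hDA y).not.mp (hylt y hy)
          push_neg at h2
          linarith
        have htend : Filter.Tendsto (fun θ => F 0 θ - E' θ) (nhdsWithin x (Set.Iio x))
            (nhds (F 0 x - E' x)) := (hcontD.tendsto x).mono_left nhdsWithin_le_nhds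
        have hge : 0 ≤ F 0 x - E' x :=
          ge_of_tendsto htend
            (Filter.eventually_of_mem self_mem_nhdsWithin fun y hy => hDpos y hy)
        have hle' : F 0 x - E' x ≤ 0 := (hDA x).mp hxA
        have heq : F 0 x = E' x := by linarith
        rw [hmin x, heq, min_self]
      · have h2 : ∃ s < m, F (s + 1) x < F 0 x := by
          by_contra h
          push_neg at h
          exact hxA fun s hs => h s hs
        obtain ⟨s, hs, hlt⟩ := h2
        have h3 : E' x < F 0 x := lt_of_le_of_lt (hE1' x s hs) hlt
        rw [hmin x, min_eq_right h3.le]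
    have hright : ∀ x : ℝ, v < (x : EReal) → E x = E' x := by
      intro x hx
      have hxA : x ∉ A := by
        intro hxA
        exact absurd hx (not_lt.mpr (le_sSup ⟨x, hxA, rfl⟩))
      have h2 : ∃ s < m, F (s + 1) x < F 0 x := by
        by_contra h
        push_neg at h
        exact hxA fun s hs => h s hs
      obtain ⟨s, hs, hlt⟩ := h2
      have h3 : E' x < F 0 x := lt_of_le_of_lt (hE1' x s hs) hlt
      rw [hmin x, min_eq_right h3.le]
    have hmid : ∀ x : ℝ, u < (x : EReal) → (x : EReal) ≤ v → E x = F 0 x := by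
      intro x hx1 hx2
      have hxA : x ∈ A := by
        obtain ⟨ae, ⟨a, haA, rfl⟩, ha⟩ := sInf_lt_iff.mp hx1
        have hax : a < x := EReal.coe_lt_coe_iff.mp ha
        rcases lt_or_eq_of_le hx2 with h' | h'
        · obtain ⟨be, ⟨b, hbA, rfl⟩, hb⟩ := lt_sSup_iff.mp h'
          have hxb : x < b := EReal.coe_lt_coe_iff.mp hb
          exact hconvA.ordConnected.out haA hbA ⟨hax.le, hxb.le⟩
        · by_contra hxA
          have hbdd : BddAbove A := by
            refine ⟨x, fun y hyA => ?_⟩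
            have h2 : (y : EReal) ≤ v := le_sSup ⟨y, hyA, rfl⟩
            rw [← h'] at h2
            exact EReal.coe_le_coe_iff.mp h2
          have hM : sSup A ∈ A := hclosedA.csSup_mem ⟨a, haA⟩ hbdd
          have hMx : sSup A < x := lt_of_le_of_ne
            (by
              have h2 : ((sSup A : ℝ) : EReal) ≤ v := le_sSup ⟨sSup A, hM, rfl⟩
              rw [← h'] at h2
              exact EReal.coe_le_coe_iff.mp h2)
            (fun h => hxA (h ▸ hM))
          have hvM : v ≤ ((sSup A : ℝ) : EReal) := by
            apply sSup_le
            rintro be ⟨b, hbA, rfl⟩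
            exact EReal.coe_le_coe_iff.mpr (le_csSup hbdd hbA)
          rw [← h'] at hvM
          exact absurd (EReal.coe_le_coe_iff.mp hvM) (not_le.mpr hMx)
      have hF0le : F 0 x ≤ E' x := by
        obtain ⟨s, hs, he⟩ := hE2' x
        rw [he]
        exact hxA s hs
      rw [hmin x, min_eq_left hF0le]
    -- apply the inductive hypothesis to the shifted family
    obtain ⟨w', hw'0, hw'k, hw'mono, hw'ref, hw'cell⟩ :=
      ih (fun s => F (s + 1)) E' hE1' hE2'
        (fun s r hsr hr => hdiff (s + 1) (r + 1) (by omega) (by omega))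
        (fun s hs j hj => hq (s + 1) (by omega) j hj)
    have hq1 : 1 ≤ q := by
      rcases Nat.eq_zero_or_pos q with h0 | h
      · exfalso
        rw [h0, hz0] at hzq
        exact absurd hzq (by simp)
      · exact h
    have hK'1 : 1 ≤ q + 2 * (m - 1) := by omega
    obtain ⟨w1, h10, h1k, h1mono, h1ref, h1stra⟩ := insertPt hK'1 hw'0 hw'k hw'mono u
    obtain ⟨w2, h20, h2k, h2mono, h2ref, h2stra⟩ := insertPt (by omega) h10 h1k h1mono v
    have hcnt : q + 2 * (m - 1) + 1 + 1 = q + 2 * (m + 1 - 1) := by omega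
    rw [hcnt] at h2k h2mono h2ref h2stra
    -- refinement of the final sequence over `w'`
    have h2ref' : ∀ j < q + 2 * (m + 1 - 1),
        ∃ i < q + 2 * (m - 1), w' i ≤ w2 j ∧ w2 (j + 1) ≤ w' (i + 1) := by
      intro j hj
      obtain ⟨i1, hi1, a1, a2⟩ := h2ref j hj
      obtain ⟨i0, hi0, b1, b2⟩ := h1ref i1 hi1
      exact ⟨i0, hi0, b1.trans a1, a2.trans b2⟩
    have h2refz : ∀ j < q + 2 * (m + 1 - 1), ∃ i < q, z i ≤ w2 j ∧ w2 (j + 1) ≤ z (i + 1) := by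
      intro j hj
      obtain ⟨i0, hi0, b1, b2⟩ := h2ref' j hj
      obtain ⟨iz, hiz, c1, c2⟩ := hw'ref i0 hi0
      exact ⟨iz, hiz, c1.trans b1, b2.trans c2⟩
    have h2straU : ∀ j < q + 2 * (m + 1 - 1), w2 (j + 1) ≤ u ∨ u ≤ w2 j := by
      intro j hj
      obtain ⟨i1, hi1, a1, a2⟩ := h2ref j hj
      rcases h1stra i1 hi1 with h | h
      · exact Or.inl (a2.trans h)
      · exact Or.inr (h.trans a1)
    refine ⟨w2, h20, h2k, h2mono, h2refz, ?_⟩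
    intro j hj
    obtain ⟨i, hiK, hc1, hc2⟩ := h2ref' j hj
    rcases h2straU j hj with hU | hU
    · exact ((hw'cell i hiK).mono hc1 hc2).congr
        (fun x hx1 hx2 => hleft x (hx2.trans hU))
    · rcases h2stra j hj with hV | hV
      · obtain ⟨iz, hizq, hd1, hd2⟩ := h2refz j hj
        exact ((hq 0 (by omega) iz hizq).mono hd1 hd2).congr
          (fun x hx1 hx2 => hmid x (lt_of_le_of_lt hU hx1) (hx2.trans hV))
      · exact ((hw'cell i hiK).mono hc1 hc2).congr
          (fun x hx1 hx2 => hright x (lt_of_le_of_lt hV hx1))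

/-- Remove duplicate cut points: from a weakly monotone cell decomposition extract a
strictly monotone one. -/
lemma weak_to_strict (f : ℝ → ℝ) : ∀ M, 1 ≤ M →
    (∃ a : ℕ → EReal, a 0 = ⊥ ∧ a M = ⊤ ∧ (∀ j < M, a j ≤ a (j + 1)) ∧
      ∀ j < M, CellQuad f (a j) (a (j + 1))) →
    ∃ M', 1 ≤ M' ∧ M' ≤ M ∧ ∃ a : ℕ → EReal, a 0 = ⊥ ∧ a M' = ⊤ ∧
      (∀ j < M', a j < a (j + 1)) ∧ ∀ j < M', CellQuad f (a j) (a (j + 1)) := by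
  intro M
  induction M using Nat.strong_induction_on with
  | _ M ihM =>
    rintro hM ⟨a, ha0, haM, hmono, hcell⟩
    by_cases hstrict : ∀ j < M, a j < a (j + 1)
    · exact ⟨M, hM, le_rfl, a, ha0, haM, hstrict, hcell⟩
    · push_neg at hstrict
      obtain ⟨j₀, hj₀, hj₀e⟩ := hstrict
      have heq : a j₀ = a (j₀ + 1) := le_antisymm (hmono j₀ hj₀) hj₀e
      have hM2 : 2 ≤ M := by
        by_contra h
        have hM1 : M = 1 := by omega
        have : j₀ = 0 := by omega
        subst this
        rw [ha0] at heq
        rw [hM1] at haM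
        rw [haM] at heq
        exact absurd heq.symm (by simp)
      classical
      set b : ℕ → EReal := fun i => if i < j₀ then a i else a (i + 1) with hb
      have hb0 : b 0 = ⊥ := by
        rcases Nat.eq_zero_or_pos j₀ with h0 | h0
        · have h1 : a 1 = ⊥ := by
            rw [h0] at heq
            rw [← ha0]
            exact heq.symm
          simp only [hb]
          rw [if_neg (by omega)]
          exact h1
        · simp only [hb]
          rw [if_pos h0, ha0]
      have hbM : b (M - 1) = ⊤ := by
        simp only [hb]
        rw [if_neg (by omega), show M - 1 + 1 = M by omega, haM]
      have hbmono : ∀ j < M - 1, b j ≤ b (j + 1) := by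
        intro j hj
        simp only [hb]
        rcases Nat.lt_or_ge (j + 1) j₀ with h | h
        · rw [if_pos (by omega), if_pos h]
          exact hmono j (by omega)
        rcases Nat.eq_or_lt_of_le h with h' | h'
        · rw [if_pos (by omega), if_neg (by omega), show j + 1 + 1 = j₀ + 1 by omega, ← heq,
            show j₀ = j + 1 by omega]
          exact hmono j (by omega)
        · rw [if_neg (by omega), if_neg (by omega)]
          exact hmono (j + 1) (by omega)
      have hbcell : ∀ j < M - 1, CellQuad f (b j) (b (j + 1)) := by
        intro j hj
        simp only [hb]
        rcases Nat.lt_or_ge (j + 1) j₀ with h | h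
        · rw [if_pos (by omega), if_pos h]
          exact hcell j (by omega)
        rcases Nat.eq_or_lt_of_le h with h' | h'
        · rw [if_pos (by omega), if_neg (by omega), show j + 1 + 1 = j₀ + 1 by omega, ← heq,
            show j₀ = j + 1 by omega]
          exact hcell j (by omega)
        · rw [if_neg (by omega), if_neg (by omega)]
          exact hcell (j + 1) (by omega)
      obtain ⟨M', h1, h2, rest⟩ := ihM (M - 1) (by omega) (by omega) ⟨b, hb0, hbM, hbmono, hbcell⟩
      exact ⟨M', h1, by omega, rest⟩

/-- Pad a strict cell decomposition up to exactly `N` cells. -/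
lemma pad_cells (f : ℝ → ℝ) (M N : ℕ) (hM : 1 ≤ M) (hMN : M ≤ N)
    (h : ∃ a : ℕ → EReal, a 0 = ⊥ ∧ a M = ⊤ ∧ (∀ j < M, a j < a (j + 1)) ∧
      ∀ j < M, CellQuad f (a j) (a (j + 1))) :
    ∃ a : ℕ → EReal, a 0 = ⊥ ∧ a N = ⊤ ∧ (∀ j < N, a j < a (j + 1)) ∧
      ∀ j < N, CellQuad f (a j) (a (j + 1)) := by
  classical
  obtain ⟨a, ha0, haM, hmono, hcell⟩ := h
  have hlt : a (M - 1) < ⊤ := by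
    have := hmono (M - 1) (by omega)
    rw [show M - 1 + 1 = M by omega, haM] at this
    exact this
  obtain ⟨x0, hx0, -⟩ := EReal.lt_iff_exists_real_btwn.mp hlt
  set b : ℕ → EReal := fun j =>
    if j < M then a j else if j < N then ((x0 + (j - M : ℕ) : ℝ) : EReal) else ⊤ with hbdef
  have hbM : ∀ j, j < M → b j = a j := by
    intro j hj; simp only [hbdef]; rw [if_pos hj]
  have hbmid : ∀ j, M ≤ j → j < N → b j = ((x0 + (j - M : ℕ) : ℝ) : EReal) := by
    intro j h1 h2; simp only [hbdef]; rw [if_neg (by omega), if_pos h2]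
  have hbtop : ∀ j, N ≤ j → b j = ⊤ := by
    intro j h1
    rcases Nat.lt_or_ge j M with h2 | h2
    · exact absurd h2 (by omega)
    · simp only [hbdef]; rw [if_neg (by omega), if_neg (by omega)]
  have hgeb : ∀ j, M - 1 ≤ j → j < N → a (M - 1) ≤ b j := by
    intro j h1 h2
    rcases Nat.lt_or_ge j M with h3 | h3
    · rw [hbM j h3, show j = M - 1 by omega]
    · rw [hbmid j h3 h2]
      calc a (M - 1) ≤ (x0 : EReal) := le_of_lt hx0
        _ ≤ _ := by
            apply EReal.coe_le_coe_iff.mpr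
            have : (0 : ℝ) ≤ ((j - M : ℕ) : ℝ) := Nat.cast_nonneg _
            linarith
  refine ⟨b, by rw [hbM 0 (by omega), ha0], hbtop N le_rfl, ?_, ?_⟩
  · intro j hj
    rcases Nat.lt_or_ge (j + 1) M with h1 | h1
    · rw [hbM j (by omega), hbM (j + 1) h1]
      exact hmono j (by omega)
    rcases Nat.eq_or_lt_of_le h1 with h2 | h2
    · -- j + 1 = M
      have hj' : j = M - 1 := by omega
      rcases Nat.lt_or_ge (j + 1) N with h3 | h3
      · rw [hbM j (by omega), hbmid (j + 1) (by omega) h3, hj',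
          show M - 1 + 1 - M = 0 by omega]
        simpa using hx0
      · rw [hbM j (by omega), hbtop (j + 1) h3, hj']
        exact hlt
    · -- M ≤ j
      rw [hbmid j (by omega) (by omega)]
      rcases Nat.lt_or_ge (j + 1) N with h3 | h3
      · rw [hbmid (j + 1) (by omega) h3]
        apply EReal.coe_lt_coe_iff.mpr
        have he : ((j + 1 - M : ℕ) : ℝ) = ((j - M : ℕ) : ℝ) + 1 := by
          push_cast [Nat.sub_add_comm (by omega : M ≤ j)]
          ring
        rw [he]
        linarith
      · rw [hbtop (j + 1) h3]
        exact EReal.coe_lt_top _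
  · intro j hj
    rcases Nat.lt_or_ge (j + 1) M with h1 | h1
    · rw [hbM j (by omega), hbM (j + 1) h1]
      exact hcell j (by omega)
    · -- cell is contained in the last original cell (a (M-1), ⊤]
      have h2 := hcell (M - 1) (by omega)
      rw [show M - 1 + 1 = M by omega, haM] at h2
      obtain ⟨c₀, c₁, c₂, hc⟩ := h2
      refine ⟨c₀, c₁, c₂, fun x hx1 hx2 => hc x (lt_of_le_of_lt (hgeb j (by omega) hj) hx1) le_top⟩

lemma convexOn_finset_sum {ι : Type*} (s : Finset ι) (f : ι → ℝ → ℝ)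
    (h : ∀ i ∈ s, ConvexOn ℝ Set.univ (f i)) :
    ConvexOn ℝ Set.univ (fun x => ∑ i ∈ s, f i x) := by
  classical
  induction s using Finset.induction_on with
  | empty => simpa using convexOn_const (0 : ℝ) convex_univ
  | insert _ _ hni ih =>
    rename_i a s
    simp only [Finset.sum_insert hni]
    exact (h a (Finset.mem_insert_self a s)).add (ih fun i hi => h i (Finset.mem_insert_of_mem hi))

/-- If each loss `θ ↦ γ(y_i; θ)` is convex and piecewise quadratic on `L` intervals,
then `θ ↦ Q_t(θ)` is piecewise quadratic on at most `2t − 1 + t(L−1)` intervals. -/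
theorem condCost_piecewise_quad_of_convex
    (γ : ℝ → ℝ → ℝ) (L : ℕ) (hL : 1 ≤ L)
    (n : ℕ) (y : ℕ → ℝ) (β : ℝ) (hβ : 0 < β)
    (hconv : ∀ i, 1 ≤ i → i ≤ n → ConvexOn ℝ Set.univ (fun θ => γ (y i) θ))
    (hquad : ∀ i, 1 ≤ i → i ≤ n → IsPiecewiseQuad (fun θ => γ (y i) θ) L)
    (t : ℕ) (ht : 1 ≤ t) (htn : t ≤ n) :
    IsPiecewiseQuad (fun θ => condCost γ y β t θ) (2 * t - 1 + t * (L - 1)) := by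
  classical
  have hFam : ∀ i, 1 ≤ i → i ≤ t → ∃ a : ℕ → EReal, a 0 = ⊥ ∧ a L = ⊤ ∧
      (∀ j < L, a j < a (j + 1)) ∧ ∀ j < L, CellQuad (fun θ => γ (y i) θ) (a j) (a (j + 1)) := by
    intro i h1 h2
    obtain ⟨a, ha0, haL, hmono, hcell⟩ := hquad i h1 (h2.trans htn)
    exact ⟨a, ha0, haL, hmono, hcell⟩
  obtain ⟨z, hz0, hzq, hzm, hzcell⟩ := gridOfFamily t L hL (fun i θ => γ (y i) θ) hFam
  have hdiffp : ∀ s r : ℕ, s < r → r < t → ConvexOn ℝ Set.univ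
      (fun θ => FCand γ y β t s θ - FCand γ y β t r θ) := by
    intro s r hsr hrt
    have hsumconv : ConvexOn ℝ Set.univ (fun θ => ∑ j ∈ Finset.Ioc s r, γ (y j) θ) :=
      convexOn_finset_sum _ _ (fun j hj => by
        rw [Finset.mem_Ioc] at hj
        exact hconv j (by omega) (by omega))
    have hkey : (fun θ => FCand γ y β t s θ - FCand γ y β t r θ) =
        fun θ => (BVal γ y β s - BVal γ y β r) + ∑ j ∈ Finset.Ioc s r, γ (y j) θ := by
      funext θ
      unfold FCand
      have hsplit := Finset.sum_Ioc_consecutive (fun j => γ (y j) θ) (le_of_lt hsr)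
        (le_of_lt hrt)
      linarith
    rw [hkey]
    exact (convexOn_const _ convex_univ).add hsumconv
  have hqp : ∀ s < t, ∀ j < t * (L - 1) + 1,
      CellQuad (FCand γ y β t s) (z j) (z (j + 1)) := by
    intro s hst j hj
    have hsum : CellQuad (fun θ => ∑ jj ∈ Finset.Ioc s t, γ (y jj) θ) (z j) (z (j + 1)) :=
      cellQuad_sum _ _ (fun i hi => by
        rw [Finset.mem_Ioc] at hi
        exact hzcell i (by omega) (by omega) j hj)
    exact hsum.add_consts (BVal γ y β s) β
  have hE1p : ∀ θ : ℝ, ∀ s < t, condCost γ y β t θ ≤ FCand γ y β t s θ :=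
    fun θ s hst => condCost_le_fcand γ y β t θ s hst
  have hE2p : ∀ θ : ℝ, ∃ s < t, condCost γ y β t θ = FCand γ y β t s θ :=
    fun θ => condCost_eq_fcand γ y β t ht θ
  obtain ⟨w, hw0, hwk, hwmono, hwref, hwcell⟩ :=
    env t ht (t * (L - 1) + 1) z hz0 hzq hzm (FCand γ y β t) (condCost γ y β t)
      hE1p hE2p hdiffp hqp
  have hK1 : 1 ≤ t * (L - 1) + 1 + 2 * (t - 1) := by omega
  obtain ⟨M', hM'1, hM'le, hstrict⟩ := weak_to_strict (fun θ => condCost γ y β t θ)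
    (t * (L - 1) + 1 + 2 * (t - 1)) hK1 ⟨w, hw0, hwk, hwmono, hwcell⟩
  have hNcnt : t * (L - 1) + 1 + 2 * (t - 1) = 2 * t - 1 + t * (L - 1) := by
    generalize t * (L - 1) = x
    omega
  exact pad_cells (fun θ => condCost γ y β t θ) M' (2 * t - 1 + t * (L - 1)) hM'1
    (hNcnt ▸ hM'le) hstrict
end
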